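/- arXiv:1109.3983 — 3 statements merged into one kernel-verified Lean document; each statement's English description precedes it below -/
import Mathlib

section
/- For every integer k with 0 ≤ k ≤ n, the linear map x ↦ ω^{n−k} ∧ x restricts to a bijection from ⋀^k(ℝ^{2n}) onto ⋀^{2n−k}(ℝ^{2n}). -/
open scoped BigOperators

noncomputable section

/-- The exterior algebra `⋀(ℝ^{2n})`, represented concretely: an element is given by its
coordinates in the basis of wedge monomials indexed by subsets of `Fin (2*n)`
(the first `n` basis indices correspond to `dx_1, …, dx_n`, the last `n` to `dξ_1, …, dξ_n`). -/
abbrev SForm (n : ℕ) := Finset (Fin (2 * n)) → ℝ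

/-- The inner product making the wedge monomials an orthonormal basis. -/
def sip {n : ℕ} (x y : SForm n) : ℝ := ∑ s : Finset (Fin (2 * n)), x s * y s

/-- The wedge product, written in coordinates over the monomial basis; the sign
counts the inversions between the two index sets. -/
def wedge {n : ℕ} (x y : SForm n) : SForm n := fun s =>
  ∑ a ∈ s.powerset,
    (-1 : ℝ) ^ (((a ×ˢ (s \ a)).filter fun q => q.2 < q.1).card) * x a * y (s \ a)

/-- `x` is a `k`-form: it is supported on monomials of degree `k`. -/
def IsForm {n : ℕ} (k : ℕ) (x : SForm n) : Prop := ∀ s, x s ≠ 0 → s.card = k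

/-- Index of `dx_i` among the `2n` basis vectors. -/
def dxI (n : ℕ) (i : Fin n) : Fin (2 * n) := ⟨i.1, by have := i.2; omega⟩

/-- Index of `dξ_i` among the `2n` basis vectors. -/
def dxiI (n : ℕ) (i : Fin n) : Fin (2 * n) := ⟨n + i.1, by have := i.2; omega⟩

/-- The basic one-form `dx_i`. -/
def sDx (n : ℕ) (i : Fin n) : SForm n := fun s => if s = {dxI n i} then 1 else 0

/-- The basic one-form `dξ_i`. -/
def sDxi (n : ℕ) (i : Fin n) : SForm n := fun s => if s = {dxiI n i} then 1 else 0

/-- The unit `1` of the exterior algebra. -/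
def sOne (n : ℕ) : SForm n := fun s => if s = ∅ then 1 else 0

/-- The standard Kähler form `ω = Σ_i dx_i ∧ dξ_i`. -/
def omegaF (n : ℕ) : SForm n := ∑ i : Fin n, wedge (sDx n i) (sDxi n i)

/-- The Lefschetz operator `L = ω ∧ ·`. -/
def Lop (n : ℕ) (x : SForm n) : SForm n := wedge (omegaF n) x

/-- The iterate `L^m`. -/
def Lpow (n : ℕ) (m : ℕ) (x : SForm n) : SForm n := (Lop n)^[m] x

/-- The power `ω^m`. -/
def omegaPow (n : ℕ) (m : ℕ) : SForm n := Lpow n m (sOne n)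

/-- `ω_n = ω^n / n!`, the volume form. -/
def omegaTop (n : ℕ) : SForm n := ((n.factorial : ℝ))⁻¹ • omegaPow n n

namespace HL

variable {n : ℕ}

/-- inversion count between two index sets -/
def inv {n : ℕ} (a b : Finset (Fin (2*n))) : ℕ := ((a ×ˢ b).filter fun q => q.2 < q.1).card

/-- the sign `(-1)^{inv a b}` -/
def sg {n : ℕ} (a b : Finset (Fin (2*n))) : ℝ := (-1)^(inv a b)

/-- the `i`-th pair `{dx_i, dξ_i}` -/
def Pr (n : ℕ) (i : Fin n) : Finset (Fin (2*n)) := {dxI n i, dxiI n i}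

lemma dxI_ne_dxiI (i : Fin n) : dxI n i ≠ dxiI n i := by
  have hi := i.2
  apply Fin.ne_of_val_ne
  show i.1 ≠ n + i.1
  omega

lemma card_Pr (i : Fin n) : (Pr n i).card = 2 := by
  rw [Pr, Finset.card_insert_of_notMem (by simp [dxI_ne_dxiI i]), Finset.card_singleton]

lemma mem_Pr {t : Fin (2*n)} {i : Fin n} : t ∈ Pr n i ↔ t.1 = i.1 ∨ t.1 = n + i.1 := by
  rw [Pr, Finset.mem_insert, Finset.mem_singleton, Fin.ext_iff, Fin.ext_iff]
  show t.1 = i.1 ∨ t.1 = n + i.1 ↔ _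
  rfl

lemma Pr_disjoint {i j : Fin n} (h : i ≠ j) : Disjoint (Pr n i) (Pr n j) := by
  have hi := i.2
  have hj := j.2
  have hij : i.1 ≠ j.1 := fun hh => h (Fin.ext hh)
  rw [Finset.disjoint_left]
  intro t ht ht'
  rw [mem_Pr] at ht ht'
  omega

/-- the unique pair index containing `t` -/
def pidx (t : Fin (2*n)) : Fin n := if h : t.1 < n then ⟨t.1, h⟩ else ⟨t.1 - n, by have := t.2; omega⟩

lemma mem_Pr_iff {t : Fin (2*n)} {i : Fin n} : t ∈ Pr n i ↔ i = pidx t := by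
  have ht := t.2
  have hi := i.2
  rw [mem_Pr]
  unfold pidx
  split <;> (rw [Fin.ext_iff]; simp only []; omega)

lemma card_split (s : Finset (Fin (2*n))) :
    ((Finset.univ.filter fun i : Fin n => Disjoint (Pr n i) s).card : ℝ)
      - ((Finset.univ.filter fun i : Fin n => Pr n i ⊆ s).card : ℝ)
      = (n : ℝ) - s.card := by
  classical
  have hcardN : s.card = ∑ i : Fin n, (s ∩ Pr n i).card := by
    have h1 : ∀ i : Fin n, (s ∩ Pr n i).card = ∑ t ∈ s, if t ∈ Pr n i then 1 else 0 := by
      intro i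
      rw [← Finset.filter_mem_eq_inter, Finset.card_filter]
    simp only [h1]
    rw [Finset.sum_comm]
    have h2 : ∀ t : Fin (2*n), (∑ i : Fin n, if t ∈ Pr n i then (1:ℕ) else 0) = 1 := by
      intro t
      have : ∀ i : Fin n, (if t ∈ Pr n i then (1:ℕ) else 0) = if i = pidx t then 1 else 0 := by
        intro i; simp [mem_Pr_iff]
      simp only [this]
      rw [Finset.sum_ite_eq']
      simp
    simp [h2]
  have hterm : ∀ i : Fin n,
      ((if Disjoint (Pr n i) s then (1:ℝ) else 0) - (if Pr n i ⊆ s then (1:ℝ) else 0))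
        = 1 - ((s ∩ Pr n i).card : ℝ) := by
    intro i
    have hc2 : (s ∩ Pr n i).card ≤ 2 := by
      calc (s ∩ Pr n i).card ≤ (Pr n i).card := Finset.card_le_card Finset.inter_subset_right
      _ = 2 := card_Pr i
    have hd : Disjoint (Pr n i) s ↔ (s ∩ Pr n i).card = 0 := by
      rw [Finset.card_eq_zero, Finset.inter_comm, ← Finset.disjoint_iff_inter_eq_empty]
    have hs : Pr n i ⊆ s ↔ (s ∩ Pr n i).card = 2 := by
      constructor
      · intro h
        rw [Finset.inter_eq_right.mpr h, card_Pr]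
      · intro h
        have he : s ∩ Pr n i = Pr n i :=
          Finset.eq_of_subset_of_card_le Finset.inter_subset_right (by rw [h, card_Pr])
        exact Finset.inter_eq_right.mp he
    by_cases h0 : Disjoint (Pr n i) s <;> by_cases h1 : Pr n i ⊆ s
    · exfalso
      have := hd.mp h0
      have := hs.mp h1
      omega
    · rw [if_pos h0, if_neg h1, hd.mp h0]; norm_num
    · rw [if_neg h0, if_pos h1, hs.mp h1]; norm_num
    · rw [if_neg h0, if_neg h1]
      have hne0 : (s ∩ Pr n i).card ≠ 0 := fun hh => h0 (hd.mpr hh)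
      have hne2 : (s ∩ Pr n i).card ≠ 2 := fun hh => h1 (hs.mpr hh)
      have : (s ∩ Pr n i).card = 1 := by omega
      rw [this]; norm_num
  rw [← Finset.sum_boole, ← Finset.sum_boole, ← Finset.sum_sub_distrib]
  simp only [hterm]
  rw [Finset.sum_sub_distrib]
  simp [hcardN]

lemma isForm_add {k : ℕ} {x y : SForm n} (hx : IsForm k x) (hy : IsForm k y) :
    IsForm k (x + y) := by
  intro s hs
  by_cases h : x s = 0
  · exact hy s (by intro h2; exact hs (by simp [Pi.add_apply, h, h2]))
  · exact hx s h

lemma isForm_neg {k : ℕ} {x : SForm n} (hx : IsForm k x) : IsForm k (-x) := by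
  intro s hs
  exact hx s (by simpa using hs)

lemma isForm_sub {k : ℕ} {x y : SForm n} (hx : IsForm k x) (hy : IsForm k y) :
    IsForm k (x - y) := by
  rw [sub_eq_add_neg]; exact isForm_add hx (isForm_neg hy)

lemma isForm_smul {k : ℕ} {c : ℝ} {x : SForm n} (hx : IsForm k x) : IsForm k (c • x) := by
  intro s hs
  exact hx s (by intro h; exact hs (by simp [Pi.smul_apply, h]))

lemma isForm_zero (k : ℕ) : IsForm k (0 : SForm n) := fun s hs => absurd rfl hs

lemma wedge_apply (x y : SForm n) (s : Finset (Fin (2*n))) :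
    wedge x y s = ∑ a ∈ s.powerset, sg a (s \ a) * x a * y (s \ a) := rfl

lemma wedge_isForm {p q : ℕ} {x y : SForm n} (hx : IsForm p x) (hy : IsForm q y) :
    IsForm (p+q) (wedge x y) := by
  intro s hs
  rw [wedge_apply] at hs
  obtain ⟨a, ha, hne⟩ := Finset.exists_ne_zero_of_sum_ne_zero hs
  have ha' : a ⊆ s := Finset.mem_powerset.mp ha
  have hxa : x a ≠ 0 := by intro h; simp [h] at hne
  have hya : y (s \ a) ≠ 0 := by intro h; simp [h] at hne
  have h1 := hx a hxa
  have h2 := hy _ hya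
  have h3 := Finset.card_sdiff_add_card_eq_card ha'
  omega

lemma wedge_add_right (x y z : SForm n) : wedge x (y + z) = wedge x y + wedge x z := by
  funext s
  simp [wedge_apply, Pi.add_apply, mul_add, Finset.sum_add_distrib]

lemma wedge_smul_right (c : ℝ) (x y : SForm n) : wedge x (c • y) = c • wedge x y := by
  funext s
  simp [wedge_apply, Pi.smul_apply, Finset.mul_sum]
  refine Finset.sum_congr rfl fun a _ => ?_
  ring

lemma wedge_sub_right (x y z : SForm n) : wedge x (y - z) = wedge x y - wedge x z := by
  funext s
  simp [wedge_apply, Pi.sub_apply, mul_sub, Finset.sum_sub_distrib]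

lemma wedge_zero_right (x : SForm n) : wedge x 0 = 0 := by
  funext s; simp [wedge_apply]

lemma sOne_wedge (x : SForm n) : wedge (sOne n) x = x := by
  funext s
  rw [wedge_apply, Finset.sum_eq_single ∅]
  · simp [sg, inv, sOne]
  · intro a _ hne
    simp [sOne, hne]
  · intro h
    exact absurd (Finset.empty_mem_powerset s) h

lemma inv_union_left {a b c : Finset (Fin (2*n))} (h : Disjoint a b) :
    inv (a ∪ b) c = inv a c + inv b c := by
  unfold inv
  rw [Finset.union_product, Finset.filter_union, Finset.card_union_of_disjoint]
  apply Finset.disjoint_filter_filter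
  rw [Finset.disjoint_left]
  intro q hq hq'
  rw [Finset.mem_product] at hq hq'
  exact (Finset.disjoint_left.mp h) hq.1 hq'.1

lemma inv_union_right {a b c : Finset (Fin (2*n))} (h : Disjoint b c) :
    inv a (b ∪ c) = inv a b + inv a c := by
  unfold inv
  rw [Finset.product_union, Finset.filter_union, Finset.card_union_of_disjoint]
  apply Finset.disjoint_filter_filter
  rw [Finset.disjoint_left]
  intro q hq hq'
  rw [Finset.mem_product] at hq hq'
  exact (Finset.disjoint_left.mp h) hq.2 hq'.2

lemma sg_union_left {a b c : Finset (Fin (2*n))} (h : Disjoint a b) :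
    sg (a ∪ b) c = sg a c * sg b c := by
  unfold sg; rw [inv_union_left h, pow_add]

lemma sg_union_right {a b c : Finset (Fin (2*n))} (h : Disjoint b c) :
    sg a (b ∪ c) = sg a b * sg a c := by
  unfold sg; rw [inv_union_right h, pow_add]

lemma sg_mul_self (a b : Finset (Fin (2*n))) : sg a b * sg a b = 1 := by
  unfold sg
  rw [← pow_add, ← two_mul, pow_mul]
  norm_num

lemma inv_add_inv {a b : Finset (Fin (2*n))} (h : Disjoint a b) :
    inv a b + inv b a = a.card * b.card := by
  unfold inv
  have h1 : ((b ×ˢ a).filter fun q => q.2 < q.1).card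
      = ((a ×ˢ b).filter fun q => q.1 < q.2).card := by
    apply Finset.card_bij (fun q _ => (q.2, q.1))
    · intro q hq
      rw [Finset.mem_filter, Finset.mem_product] at hq ⊢
      exact ⟨⟨hq.1.2, hq.1.1⟩, hq.2⟩
    · intro q hq q' hq' he
      have h1 := congrArg Prod.fst he
      have h2 := congrArg Prod.snd he
      simp only [] at h1 h2
      exact Prod.ext h2 h1
    · intro q hq
      rw [Finset.mem_filter, Finset.mem_product] at hq
      exact ⟨(q.2, q.1), by rw [Finset.mem_filter, Finset.mem_product]; exact ⟨⟨hq.1.2, hq.1.1⟩, hq.2⟩, rfl⟩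
  rw [h1]
  have h2 : ((a ×ˢ b).filter fun q => q.1 < q.2).card
      = ((a ×ˢ b).filter fun q => ¬ q.2 < q.1).card := by
    congr 1
    apply Finset.filter_congr
    intro q hq
    rw [Finset.mem_product] at hq
    have hne : q.1 ≠ q.2 := by
      intro he
      exact (Finset.disjoint_left.mp h) hq.1 (he ▸ hq.2)
    constructor
    · intro h'; simp; omega
    · intro h'; simp at h'; omega
  rw [h2, Finset.card_filter_add_card_filter_not, Finset.card_product]

lemma sigma_ext {α : Type*} (a c : α) (b d : α) (h1 : a = c) (h2 : b = d) :
    (⟨a, b⟩ : Σ _ : α, α) = ⟨c, d⟩ := by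
  subst h1; subst h2; rfl

lemma wedge_assoc (x y z : SForm n) : wedge (wedge x y) z = wedge x (wedge y z) := by
  funext s
  rw [wedge_apply, wedge_apply]
  simp only [wedge_apply, Finset.sum_mul, Finset.mul_sum]
  rw [← Finset.sum_sigma (s.powerset) (fun a => a.powerset)
    (fun p => sg p.1 (s \ p.1) * (sg p.2 (p.1 \ p.2) * x p.2 * y (p.1 \ p.2)) * z (s \ p.1))]
  rw [← Finset.sum_sigma (s.powerset) (fun b => (s \ b).powerset)
    (fun q => sg q.1 (s \ q.1) * x q.1 * (sg q.2 ((s \ q.1) \ q.2) * y q.2 * z ((s \ q.1) \ q.2)))]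
  apply Finset.sum_nbij' (i := fun p => (⟨p.2, p.1 \ p.2⟩ : Σ _ : Finset (Fin (2*n)), Finset (Fin (2*n))))
    (j := fun q => (⟨q.1 ∪ q.2, q.1⟩ : Σ _ : Finset (Fin (2*n)), Finset (Fin (2*n))))
  · intro p hp
    rw [Finset.mem_sigma, Finset.mem_powerset, Finset.mem_powerset] at hp ⊢
    exact ⟨hp.2.trans hp.1, Finset.sdiff_subset_sdiff hp.1 (Finset.Subset.refl _)⟩
  · intro q hq
    rw [Finset.mem_sigma, Finset.mem_powerset, Finset.mem_powerset] at hq ⊢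
    constructor
    · exact Finset.union_subset hq.1 (hq.2.trans (Finset.sdiff_subset))
    · exact Finset.subset_union_left
  · intro p hp
    rw [Finset.mem_sigma, Finset.mem_powerset, Finset.mem_powerset] at hp
    exact sigma_ext _ _ _ _ (Finset.union_sdiff_of_subset hp.2) rfl
  · intro q hq
    rw [Finset.mem_sigma, Finset.mem_powerset, Finset.mem_powerset] at hq
    have hdisj : Disjoint q.1 q.2 := Finset.disjoint_of_subset_right hq.2 Finset.disjoint_sdiff
    exact sigma_ext _ _ _ _ rfl (Finset.union_sdiff_cancel_left hdisj)
  · intro p hp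
    rw [Finset.mem_sigma, Finset.mem_powerset, Finset.mem_powerset] at hp
    obtain ⟨has, hba⟩ := hp
    -- p.1 = a, p.2 = b, b ⊆ a ⊆ s
    have hsb : s \ p.2 = (p.1 \ p.2) ∪ (s \ p.1) := by
      rw [Finset.union_comm, Finset.sdiff_union_sdiff_cancel has hba]
    have hd1 : Disjoint p.2 (p.1 \ p.2) := Finset.disjoint_sdiff
    have hd2 : Disjoint (p.1 \ p.2) (s \ p.1) :=
      Finset.disjoint_of_subset_left (Finset.sdiff_subset) Finset.disjoint_sdiff
    have ha : p.1 = p.2 ∪ (p.1 \ p.2) := (Finset.union_sdiff_of_subset hba).symm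
    have hss : (s \ p.2) \ (p.1 \ p.2) = s \ p.1 := by
      rw [hsb, Finset.union_sdiff_cancel_left hd2]
    rw [hss, hsb]
    rw [sg_union_right hd2]
    calc sg p.1 (s \ p.1) * (sg p.2 (p.1 \ p.2) * x p.2 * y (p.1 \ p.2)) * z (s \ p.1)
        = (sg p.1 (s \ p.1) * sg p.2 (p.1 \ p.2)) * x p.2 * y (p.1 \ p.2) * z (s \ p.1) := by ring
      _ = (sg p.2 (s \ p.1) * sg (p.1 \ p.2) (s \ p.1) * sg p.2 (p.1 \ p.2)) * x p.2 * y (p.1 \ p.2) * z (s \ p.1) := by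
          rw [ha, sg_union_left hd1, ← ha]
      _ = sg p.2 (p.1 \ p.2) * sg p.2 (s \ p.1) * x p.2 * (sg (p.1 \ p.2) (s \ p.1) * y (p.1 \ p.2) * z (s \ p.1)) := by ring
lemma omegaF_apply (s : Finset (Fin (2*n))) :
    omegaF n s = ∑ i : Fin n, if s = Pr n i then (1:ℝ) else 0 := by
  rw [omegaF]
  rw [Finset.sum_apply]
  refine Finset.sum_congr rfl fun i _ => ?_
  by_cases h : s = Pr n i
  · subst h
    rw [if_pos rfl, wedge_apply, Finset.sum_eq_single {dxI n i}]
    · have hsd : Pr n i \ {dxI n i} = {dxiI n i} := by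
        rw [Pr]
        ext t
        simp only [Finset.mem_sdiff, Finset.mem_insert, Finset.mem_singleton]
        constructor
        · rintro ⟨h1 | h1, h2⟩
          · exact absurd h1 h2
          · exact h1
        · intro h1
          subst h1
          exact ⟨Or.inr rfl, fun hh => dxI_ne_dxiI i hh.symm⟩
      rw [hsd]
      have hinv : inv ({dxI n i} : Finset (Fin (2*n))) {dxiI n i} = 0 := by
        unfold inv
        rw [Finset.card_eq_zero, Finset.filter_eq_empty_iff]
        intro q hq
        rw [Finset.singleton_product_singleton, Finset.mem_singleton] at hq
        subst hq
        simp only [not_lt]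
        apply Fin.le_of_lt
        show (dxI n i).1 < (dxiI n i).1
        show i.1 < n + i.1
        have := i.2; omega
      have hsg : sg ({dxI n i} : Finset (Fin (2*n))) {dxiI n i} = 1 := by
        unfold sg; rw [hinv]; norm_num
      show sg _ _ * sDx n i _ * sDxi n i _ = 1
      rw [hsg]
      simp [sDx, sDxi]
    · intro a _ hne
      show sg _ _ * sDx n i a * sDxi n i _ = 0
      rw [sDx, if_neg hne, mul_zero, zero_mul]
    · intro h
      exfalso
      apply h
      rw [Finset.mem_powerset, Pr]
      intro t ht
      rw [Finset.mem_singleton] at ht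
      subst ht
      exact Finset.mem_insert_self _ _
  · rw [if_neg h, wedge_apply]
    apply Finset.sum_eq_zero
    intro a ha
    rw [Finset.mem_powerset] at ha
    by_cases h1 : a = {dxI n i}
    · by_cases h2 : s \ a = {dxiI n i}
      · exfalso
        apply h
        have huni : a ∪ s \ a = s := Finset.union_sdiff_of_subset ha
        rw [h2, h1] at huni
        rw [← huni, Pr, Finset.insert_eq]
      · show sg _ _ * sDx n i a * sDxi n i _ = 0
        rw [sDxi, if_neg h2, mul_zero]
    · show sg _ _ * sDx n i a * sDxi n i _ = 0
      rw [sDx, if_neg h1, mul_zero, zero_mul]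

lemma Lop_apply (x : SForm n) (s : Finset (Fin (2*n))) :
    Lop n x s = ∑ i : Fin n,
      if Pr n i ⊆ s then sg (Pr n i) (s \ Pr n i) * x (s \ Pr n i) else 0 := by
  rw [Lop, wedge_apply]
  have hterm : ∀ a ∈ s.powerset, sg a (s \ a) * omegaF n a * x (s \ a)
      = ∑ i : Fin n, if a = Pr n i then sg a (s \ a) * x (s \ a) else 0 := by
    intro a _
    rw [omegaF_apply, Finset.mul_sum, Finset.sum_mul]
    refine Finset.sum_congr rfl fun i _ => ?_
    by_cases h : a = Pr n i
    · rw [if_pos h, if_pos h]; ring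
    · rw [if_neg h, if_neg h]; ring
  rw [Finset.sum_congr rfl hterm, Finset.sum_comm]
  refine Finset.sum_congr rfl fun i _ => ?_
  have : ∀ a ∈ s.powerset, (if a = Pr n i then sg a (s \ a) * x (s \ a) else 0)
      = if a = Pr n i then sg (Pr n i) (s \ Pr n i) * x (s \ Pr n i) else 0 := by
    intro a _
    by_cases h : a = Pr n i
    · subst h; rfl
    · rw [if_neg h, if_neg h]
  rw [Finset.sum_congr rfl this, Finset.sum_ite_eq' s.powerset (Pr n i)
    (fun _ => sg (Pr n i) (s \ Pr n i) * x (s \ Pr n i))]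
  simp only [Finset.mem_powerset]

/-- the adjoint of the Lefschetz operator -/
def lamF (n : ℕ) (x : SForm n) : SForm n := fun s =>
  ∑ i : Fin n, if Disjoint (Pr n i) s then sg (Pr n i) s * x (s ∪ Pr n i) else 0

lemma sip_Lop (x y : SForm n) : sip (Lop n x) y = sip x (lamF n y) := by
  unfold sip
  have h1 : ∀ s, Lop n x s * y s = ∑ i : Fin n,
      if Pr n i ⊆ s then sg (Pr n i) (s \ Pr n i) * x (s \ Pr n i) * y s else 0 := by
    intro s
    rw [Lop_apply, Finset.sum_mul]
    refine Finset.sum_congr rfl fun i _ => ?_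
    by_cases h : Pr n i ⊆ s
    · rw [if_pos h, if_pos h]
    · rw [if_neg h, if_neg h, zero_mul]
  have h2 : ∀ s, x s * lamF n y s = ∑ i : Fin n,
      if Disjoint (Pr n i) s then sg (Pr n i) s * x s * y (s ∪ Pr n i) else 0 := by
    intro s
    rw [lamF, Finset.mul_sum]
    refine Finset.sum_congr rfl fun i _ => ?_
    by_cases h : Disjoint (Pr n i) s
    · rw [if_pos h, if_pos h]; ring
    · rw [if_neg h, if_neg h, mul_zero]
  simp only [h1, h2]
  rw [Finset.sum_comm, Finset.sum_comm (γ := Finset (Fin (2*n)))]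
  refine Finset.sum_congr rfl fun i _ => ?_
  have hinvol : Function.Involutive (fun s : Finset (Fin (2*n)) => symmDiff s (Pr n i)) :=
    fun s => symmDiff_symmDiff_cancel_right (Pr n i) s
  apply Fintype.sum_equiv (Function.Involutive.toPerm _ hinvol)
  intro s
  have hps : (Function.Involutive.toPerm _ hinvol) s = symmDiff s (Pr n i) := rfl
  rw [hps]
  by_cases h : Pr n i ⊆ s
  · have he : symmDiff s (Pr n i) = s \ Pr n i := by
      rw [symmDiff_def]
      show s \ Pr n i ∪ Pr n i \ s = _
      rw [Finset.sdiff_eq_empty_iff_subset.mpr h, Finset.union_empty]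
    have hd : Disjoint (Pr n i) (s \ Pr n i) := Finset.disjoint_sdiff
    have hu : s \ Pr n i ∪ Pr n i = s := Finset.sdiff_union_of_subset h
    rw [if_pos h, he, if_pos hd, hu]
  · have hne : ¬ Disjoint (Pr n i) (symmDiff s (Pr n i)) := by
      intro hd
      obtain ⟨t, ht, hts⟩ := Finset.not_subset.mp h
      have : t ∈ symmDiff s (Pr n i) := by
        rw [symmDiff_def]
        show t ∈ s \ Pr n i ∪ Pr n i \ s
        rw [Finset.mem_union, Finset.mem_sdiff, Finset.mem_sdiff]
        exact Or.inr ⟨ht, hts⟩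
      exact (Finset.disjoint_right.mp hd) this ht
    rw [if_neg h, if_neg hne]
lemma lamF_Lop_apply (x : SForm n) (s : Finset (Fin (2*n))) :
    lamF n (Lop n x) s = ∑ i : Fin n, ∑ j : Fin n,
      if Disjoint (Pr n i) s ∧ Pr n j ⊆ s ∪ Pr n i
      then sg (Pr n i) s * (sg (Pr n j) ((s ∪ Pr n i) \ Pr n j) * x ((s ∪ Pr n i) \ Pr n j))
      else 0 := by
  rw [lamF]
  refine Finset.sum_congr rfl fun i _ => ?_
  by_cases h : Disjoint (Pr n i) s
  · rw [if_pos h, Lop_apply, Finset.mul_sum]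
    refine Finset.sum_congr rfl fun j _ => ?_
    by_cases h2 : Pr n j ⊆ s ∪ Pr n i
    · rw [if_pos h2, if_pos ⟨h, h2⟩]
    · rw [if_neg h2, if_neg (fun hh => h2 hh.2), mul_zero]
  · rw [if_neg h]
    symm
    apply Finset.sum_eq_zero
    intro j _
    rw [if_neg (fun hh => h hh.1)]

lemma Lop_lamF_apply (x : SForm n) (s : Finset (Fin (2*n))) :
    Lop n (lamF n x) s = ∑ j : Fin n, ∑ i : Fin n,
      if Pr n j ⊆ s ∧ Disjoint (Pr n i) (s \ Pr n j)
      then sg (Pr n j) (s \ Pr n j) * (sg (Pr n i) (s \ Pr n j) * x ((s \ Pr n j) ∪ Pr n i))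
      else 0 := by
  rw [Lop_apply]
  refine Finset.sum_congr rfl fun j _ => ?_
  by_cases h : Pr n j ⊆ s
  · rw [if_pos h, lamF, Finset.mul_sum]
    refine Finset.sum_congr rfl fun i _ => ?_
    by_cases h2 : Disjoint (Pr n i) (s \ Pr n j)
    · rw [if_pos h2, if_pos ⟨h, h2⟩]
    · rw [if_neg h2, if_neg (fun hh => h2 hh.2), mul_zero]
  · rw [if_neg h]
    symm
    apply Finset.sum_eq_zero
    intro i _
    rw [if_neg (fun hh => h hh.1)]

lemma sg_Pr_mul (i j : Fin n) (h : i ≠ j) : sg (Pr n i) (Pr n j) * sg (Pr n j) (Pr n i) = 1 := by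
  unfold sg
  rw [← pow_add, inv_add_inv (Pr_disjoint h), card_Pr, card_Pr]
  norm_num

lemma comm_apply (x : SForm n) (s : Finset (Fin (2*n))) :
    lamF n (Lop n x) s - Lop n (lamF n x) s
      = (((Finset.univ.filter fun i : Fin n => Disjoint (Pr n i) s).card : ℝ)
          - ((Finset.univ.filter fun i : Fin n => Pr n i ⊆ s).card : ℝ)) * x s := by
  classical
  rw [lamF_Lop_apply, Lop_lamF_apply]
  rw [Finset.sum_comm (s := Finset.univ) (t := Finset.univ)
    (f := fun j i => if Pr n j ⊆ s ∧ Disjoint (Pr n i) (s \ Pr n j)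
      then sg (Pr n j) (s \ Pr n j) * (sg (Pr n i) (s \ Pr n j) * x ((s \ Pr n j) ∪ Pr n i))
      else 0)]
  rw [← Finset.sum_sub_distrib]
  have key : ∀ i : Fin n, (∑ j : Fin n,
      (if Disjoint (Pr n i) s ∧ Pr n j ⊆ s ∪ Pr n i
      then sg (Pr n i) s * (sg (Pr n j) ((s ∪ Pr n i) \ Pr n j) * x ((s ∪ Pr n i) \ Pr n j))
      else 0))
      - (∑ j : Fin n,
      (if Pr n j ⊆ s ∧ Disjoint (Pr n i) (s \ Pr n j)
      then sg (Pr n j) (s \ Pr n j) * (sg (Pr n i) (s \ Pr n j) * x ((s \ Pr n j) ∪ Pr n i))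
      else 0))
      = (if Disjoint (Pr n i) s then (1:ℝ) else 0) * x s
        - (if Pr n i ⊆ s then (1:ℝ) else 0) * x s := by
    intro i
    rw [← Finset.sum_sub_distrib]
    rw [Finset.sum_eq_single i]
    · congr 1
      · -- diagonal term for the first sum
        by_cases h : Disjoint (Pr n i) s
        · rw [if_pos ⟨h, Finset.subset_union_right⟩, if_pos h, one_mul]
          rw [Finset.union_sdiff_cancel_right h.symm]
          rw [← mul_assoc, sg_mul_self, one_mul]
        · rw [if_neg (fun hh => h hh.1), if_neg h, zero_mul]
      · -- diagonal term for the second sum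
        by_cases h : Pr n i ⊆ s
        · rw [if_pos ⟨h, Finset.disjoint_sdiff⟩, if_pos h, one_mul]
          rw [Finset.sdiff_union_of_subset h]
          rw [← mul_assoc, sg_mul_self, one_mul]
        · rw [if_neg (fun hh => h hh.1), if_neg h, zero_mul]
    · intro j _ hji
      have hij : i ≠ j := Ne.symm hji
      have hdisj : Disjoint (Pr n i) (Pr n j) := Pr_disjoint hij
      rw [sub_eq_zero]
      by_cases hc : Disjoint (Pr n i) s ∧ Pr n j ⊆ s ∪ Pr n i
      · have hjs : Pr n j ⊆ s := by
          intro t ht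
          rcases Finset.mem_union.mp (hc.2 ht) with h' | h'
          · exact h'
          · exact absurd h' (fun hmem => (Finset.disjoint_right.mp hdisj ht) hmem)
        have hdisj2 : Disjoint (Pr n i) (s \ Pr n j) :=
          Finset.disjoint_of_subset_right (Finset.sdiff_subset) hc.1
        rw [if_pos hc, if_pos ⟨hjs, hdisj2⟩]
        have hset : (s ∪ Pr n i) \ Pr n j = (s \ Pr n j) ∪ Pr n i := by
          rw [Finset.union_sdiff_distrib,
            (Finset.sdiff_eq_self_iff_disjoint.mpr hdisj : Pr n i \ Pr n j = Pr n i)]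
        rw [hset]
        have hs' : s = (s \ Pr n j) ∪ Pr n j := (Finset.sdiff_union_of_subset hjs).symm
        have hd3 : Disjoint (s \ Pr n j) (Pr n j) := Finset.sdiff_disjoint
        have e1 : sg (Pr n i) s = sg (Pr n i) (s \ Pr n j) * sg (Pr n i) (Pr n j) := by
          conv_lhs => rw [hs']
          rw [sg_union_right hd3]
        have e2 : sg (Pr n j) ((s \ Pr n j) ∪ Pr n i)
            = sg (Pr n j) (s \ Pr n j) * sg (Pr n j) (Pr n i) :=
          sg_union_right hdisj2.symm
        rw [e1, e2]
        linear_combination (sg (Pr n i) (s \ Pr n j) * sg (Pr n j) (s \ Pr n j)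
          * x ((s \ Pr n j) ∪ Pr n i)) * (sg_Pr_mul i j hij)
      · have hc' : ¬ (Pr n j ⊆ s ∧ Disjoint (Pr n i) (s \ Pr n j)) := by
          intro hh
          apply hc
          constructor
          · have hd := Finset.disjoint_union_right.mpr ⟨hh.2, hdisj⟩
            rwa [Finset.sdiff_union_of_subset hh.1] at hd
          · exact hh.1.trans Finset.subset_union_left
        rw [if_neg hc, if_neg hc']
    · intro h
      exact absurd (Finset.mem_univ i) h
  rw [Finset.sum_congr rfl (fun i _ => key i)]
  rw [Finset.sum_sub_distrib, ← Finset.sum_mul, ← Finset.sum_mul, Finset.sum_boole, Finset.sum_boole]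
  ring
lemma Lop_add (x y : SForm n) : Lop n (x + y) = Lop n x + Lop n y := by
  rw [Lop, Lop, Lop, wedge_add_right]

lemma Lop_smul (c : ℝ) (x : SForm n) : Lop n (c • x) = c • Lop n x := by
  rw [Lop, Lop, wedge_smul_right]

lemma Lop_sub (x y : SForm n) : Lop n (x - y) = Lop n x - Lop n y := by
  rw [Lop, Lop, Lop, wedge_sub_right]

lemma Lop_zero : Lop n (0 : SForm n) = 0 := by
  rw [Lop, wedge_zero_right]

lemma lamF_add (x y : SForm n) : lamF n (x + y) = lamF n x + lamF n y := by
  funext s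
  rw [Pi.add_apply, lamF, lamF, lamF, ← Finset.sum_add_distrib]
  refine Finset.sum_congr rfl fun i _ => ?_
  by_cases h : Disjoint (Pr n i) s
  · rw [if_pos h, if_pos h, if_pos h, Pi.add_apply]; ring
  · rw [if_neg h, if_neg h, if_neg h, add_zero]

lemma lamF_smul (c : ℝ) (x : SForm n) : lamF n (c • x) = c • lamF n x := by
  funext s
  rw [Pi.smul_apply, lamF, lamF, smul_eq_mul, Finset.mul_sum]
  refine Finset.sum_congr rfl fun i _ => ?_
  by_cases h : Disjoint (Pr n i) s
  · rw [if_pos h, if_pos h, Pi.smul_apply, smul_eq_mul]; ring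
  · rw [if_neg h, if_neg h, mul_zero]

lemma lamF_zero : lamF n (0 : SForm n) = 0 := by
  funext s
  rw [lamF]
  apply Finset.sum_eq_zero
  intro i _
  by_cases h : Disjoint (Pr n i) s
  · rw [if_pos h, Pi.zero_apply, mul_zero]
  · rw [if_neg h]

lemma Lop_iter_add (m : ℕ) (x y : SForm n) :
    (Lop n)^[m] (x + y) = (Lop n)^[m] x + (Lop n)^[m] y := by
  induction m generalizing x y with
  | zero => rfl
  | succ m ih => rw [Function.iterate_succ_apply, Function.iterate_succ_apply,
      Function.iterate_succ_apply, Lop_add, ih]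

lemma Lop_iter_smul (m : ℕ) (c : ℝ) (x : SForm n) :
    (Lop n)^[m] (c • x) = c • (Lop n)^[m] x := by
  induction m generalizing x with
  | zero => rfl
  | succ m ih => rw [Function.iterate_succ_apply, Function.iterate_succ_apply, Lop_smul, ih]

lemma Lop_iter_zero (m : ℕ) : (Lop n)^[m] (0 : SForm n) = 0 := by
  induction m with
  | zero => rfl
  | succ m ih => rw [Function.iterate_succ_apply, Lop_zero, ih]

lemma lamF_iter_smul (m : ℕ) (c : ℝ) (x : SForm n) :
    (lamF n)^[m] (c • x) = c • (lamF n)^[m] x := by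
  induction m generalizing x with
  | zero => rfl
  | succ m ih => rw [Function.iterate_succ_apply, Function.iterate_succ_apply, lamF_smul, ih]

lemma lamF_iter_zero (m : ℕ) : (lamF n)^[m] (0 : SForm n) = 0 := by
  induction m with
  | zero => rfl
  | succ m ih => rw [Function.iterate_succ_apply, lamF_zero, ih]

lemma omegaF_isForm : IsForm 2 (omegaF n) := by
  intro s hs
  rw [omegaF_apply] at hs
  obtain ⟨i, _, hne⟩ := Finset.exists_ne_zero_of_sum_ne_zero hs
  have : s = Pr n i := by
    by_contra h
    rw [if_neg h] at hne
    exact hne rfl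
  rw [this, card_Pr]

lemma Lop_isForm {k : ℕ} {x : SForm n} (hx : IsForm k x) : IsForm (k + 2) (Lop n x) := by
  have := wedge_isForm (omegaF_isForm (n := n)) hx
  rw [Lop]
  intro s hs
  have := this s hs
  omega

lemma Lop_iter_isForm {k : ℕ} {x : SForm n} (hx : IsForm k x) (m : ℕ) :
    IsForm (k + 2 * m) ((Lop n)^[m] x) := by
  induction m with
  | zero => simpa using hx
  | succ m ih =>
    rw [Function.iterate_succ_apply']
    have := Lop_isForm ih
    intro s hs
    have := this s hs
    omega

lemma lamF_isForm {k : ℕ} {x : SForm n} (hx : IsForm (k + 2) x) : IsForm k (lamF n x) := by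
  intro s hs
  rw [lamF] at hs
  obtain ⟨i, _, hne⟩ := Finset.exists_ne_zero_of_sum_ne_zero hs
  have hd : Disjoint (Pr n i) s := by
    by_contra h
    rw [if_neg h] at hne
    exact hne rfl
  rw [if_pos hd] at hne
  have hxu : x (s ∪ Pr n i) ≠ 0 := by
    intro h
    rw [h, mul_zero] at hne
    exact hne rfl
  have hcard := hx _ hxu
  rw [Finset.card_union_of_disjoint hd.symm, card_Pr] at hcard
  omega

lemma lamF_eq_zero_of_low {k : ℕ} {x : SForm n} (hk : k ≤ 1) (hx : IsForm k x) :
    lamF n x = 0 := by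
  funext s
  rw [lamF]
  apply Finset.sum_eq_zero
  intro i _
  by_cases h : Disjoint (Pr n i) s
  · rw [if_pos h]
    have hxu : x (s ∪ Pr n i) = 0 := by
      by_contra hne
      have := hx _ hne
      rw [Finset.card_union_of_disjoint h.symm, card_Pr] at this
      omega
    rw [hxu, mul_zero]
  · rw [if_neg h]

lemma commutator {k : ℕ} {x : SForm n} (hx : IsForm k x) :
    lamF n (Lop n x) = Lop n (lamF n x) + ((n:ℝ) - k) • x := by
  funext s
  have hca := comm_apply x s
  rw [Pi.add_apply, Pi.smul_apply, smul_eq_mul]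
  by_cases hxs : x s = 0
  · rw [hxs, mul_zero] at hca ⊢
    rw [add_zero]
    linarith
  · have hcard := hx s hxs
    rw [card_split s, hcard] at hca
    linarith

/-- the fundamental commutation identity for iterates -/
lemma commutator_iter {k : ℕ} {x : SForm n} (hx : IsForm k x) (r : ℕ) :
    lamF n ((Lop n)^[r+1] x)
      = (Lop n)^[r+1] (lamF n x) + (((r:ℝ)+1) * ((n:ℝ) - k - r)) • (Lop n)^[r] x := by
  induction r with
  | zero =>
    simp only [zero_add, Function.iterate_one, Function.iterate_zero, id_eq, Nat.cast_zero]
    rw [commutator hx]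
    congr 1
    norm_num
  | succ r ih =>
    have hform : IsForm (k + 2 * (r+1)) ((Lop n)^[r+1] x) := Lop_iter_isForm hx (r+1)
    rw [Function.iterate_succ_apply' (Lop n) (r+1) x, commutator hform, ih]
    rw [Lop_add, Lop_smul]
    rw [← Function.iterate_succ_apply' (Lop n) r x]
    simp only [Nat.succ_eq_add_one]
    rw [← Function.iterate_succ_apply' (Lop n) (r+1) (lamF n x)]
    rw [add_assoc, ← add_smul]
    congr 1
    push_cast
    ring
lemma sip_zero_left (y : SForm n) : sip 0 y = 0 := by
  unfold sip; simp

lemma sip_zero_right (x : SForm n) : sip x 0 = 0 := by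
  unfold sip; simp

lemma sip_add_left (x y z : SForm n) : sip (x + y) z = sip x z + sip y z := by
  unfold sip
  rw [← Finset.sum_add_distrib]
  refine Finset.sum_congr rfl fun s _ => ?_
  rw [Pi.add_apply]; ring

lemma sip_smul_right (c : ℝ) (x y : SForm n) : sip x (c • y) = c * sip x y := by
  unfold sip
  rw [Finset.mul_sum]
  refine Finset.sum_congr rfl fun s _ => ?_
  rw [Pi.smul_apply, smul_eq_mul]; ring

lemma sip_self_eq_zero {x : SForm n} (h : sip x x = 0) : x = 0 := by
  funext s
  show x s = 0
  have := (Finset.sum_eq_zero_iff_of_nonneg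
    (fun t _ => mul_self_nonneg (x t))).mp h s (Finset.mem_univ s)
  exact mul_self_eq_zero.mp this

lemma sip_Lop_iter (m : ℕ) (x y : SForm n) :
    sip ((Lop n)^[m] x) y = sip x ((lamF n)^[m] y) := by
  induction m generalizing y with
  | zero => rfl
  | succ m ih =>
    rw [Function.iterate_succ_apply' (Lop n) m x, Function.iterate_succ_apply (lamF n) m y]
    rw [sip_Lop, ih]

lemma prim_iter {k : ℕ} {x : SForm n} (hk : k ≤ n) (hx : IsForm k x) (hprim : lamF n x = 0) :
    ∀ r, r ≤ n - k → ∃ c : ℝ, 0 < c ∧ (lamF n)^[r] ((Lop n)^[r] x) = c • x := by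
  intro r
  induction r with
  | zero => exact fun _ => ⟨1, one_pos, (one_smul ℝ x).symm⟩
  | succ r ih =>
    intro hr
    obtain ⟨c, hc, hcx⟩ := ih (by omega)
    have hcomm := commutator_iter hx r
    rw [hprim, Lop_iter_zero, zero_add] at hcomm
    rw [Function.iterate_succ_apply (lamF n) r ((Lop n)^[r+1] x), hcomm,
      lamF_iter_smul, hcx, smul_smul]
    have h1 : (0:ℝ) < (r:ℝ) + 1 := by positivity
    have h2 : (0:ℝ) < (n:ℝ) - k - r := by
      have hle : (k + r + 1 : ℕ) ≤ n := by omega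
      have := (Nat.cast_le (α := ℝ)).mpr hle
      push_cast at this
      linarith
    exact ⟨((r:ℝ)+1) * ((n:ℝ) - k - r) * c, by positivity, rfl⟩

lemma prim_inj {k : ℕ} {x : SForm n} (hk : k ≤ n) (hx : IsForm k x) (hprim : lamF n x = 0)
    (hL : (Lop n)^[n-k] x = 0) : x = 0 := by
  obtain ⟨c, hc, hcx⟩ := prim_iter hk hx hprim (n-k) le_rfl
  rw [hL, lamF_iter_zero] at hcx
  rcases smul_eq_zero.mp hcx.symm with h | h
  · exact absurd h (ne_of_gt hc)
  · exact h

/-- `L` as a linear map -/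
def Llin (n : ℕ) : SForm n →ₗ[ℝ] SForm n where
  toFun := Lop n
  map_add' := Lop_add
  map_smul' := Lop_smul

/-- the subspace of `k`-forms -/
def Vsub (n k : ℕ) : Submodule ℝ (SForm n) where
  carrier := {x | IsForm k x}
  add_mem' := fun hx hy => isForm_add hx hy
  zero_mem' := isForm_zero k
  smul_mem' := fun c x hx => isForm_smul hx

lemma mem_Vsub {k : ℕ} {x : SForm n} : x ∈ Vsub n k ↔ IsForm k x := Iff.rfl

abbrev Esp (n : ℕ) := EuclideanSpace ℝ (Finset (Fin (2*n)))

def toE (n : ℕ) : SForm n ≃ₗ[ℝ] Esp n := (WithLp.linearEquiv 2 ℝ (SForm n)).symm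

lemma toE_apply (x : SForm n) (s : Finset (Fin (2*n))) : toE n x s = x s := rfl

lemma sip_toE (x y : SForm n) : sip x y = inner (𝕜 := ℝ) (toE n x) (toE n y) := by
  rw [PiLp.inner_apply]
  unfold sip
  refine Finset.sum_congr rfl fun s _ => ?_
  rw [toE_apply, toE_apply, RCLike.inner_apply, conj_trivial]
  ring

lemma decomp {k : ℕ} (hk : 2 ≤ k) {x : SForm n} (hx : IsForm k x) :
    ∃ p y : SForm n, IsForm k p ∧ lamF n p = 0 ∧ IsForm (k-2) y ∧ x = p + Lop n y := by
  classical
  set W : Submodule ℝ (SForm n) := Submodule.map (Llin n) (Vsub n (k-2)) with hW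
  set W' : Submodule ℝ (Esp n) := Submodule.map (toE n : SForm n →ₗ[ℝ] Esp n) W with hW'
  obtain ⟨w', hw', p', hp', hxe⟩ := Submodule.exists_add_mem_mem_orthogonal (K := W') (toE n x)
  rw [hW'] at hw'
  obtain ⟨w, hwW, hww⟩ := Submodule.mem_map.mp hw'
  obtain ⟨y, hyV, hLyw⟩ := Submodule.mem_map.mp hwW
  set p : SForm n := (toE n).symm p' with hpdef
  have hk2 : k - 2 + 2 = k := by omega
  have hLy : Lop n y = w := hLyw
  have hxeq : x = p + Lop n y := by
    apply (toE n).injective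
    rw [map_add, hLy, (toE n).apply_symm_apply, (show toE n w = w' from hww), hxe, add_comm]
  have hLyform : IsForm k (Lop n y) := by
    have := Lop_isForm hyV
    rwa [hk2] at this
  have hpform : IsForm k p := by
    have hsub : p = x - Lop n y := by rw [hxeq]; abel
    rw [hsub]
    exact isForm_sub hx hLyform
  have hporth : ∀ u : SForm n, u ∈ W → sip u p = 0 := by
    intro u hu
    have hu' : toE n u ∈ W' := by
      rw [hW']
      exact Submodule.mem_map_of_mem hu
    have hinner := (Submodule.mem_orthogonal W' p').mp hp' (toE n u) hu'
    rw [sip_toE, hpdef, (toE n).apply_symm_apply]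
    exact hinner
  have hlamp : lamF n p = 0 := by
    have hlp : IsForm (k-2) (lamF n p) := lamF_isForm (by rwa [hk2])
    have hLlam : Lop n (lamF n p) ∈ W := by
      rw [hW]
      exact ⟨lamF n p, hlp, rfl⟩
    have h0 := hporth _ hLlam
    rw [sip_Lop] at h0
    exact sip_self_eq_zero h0
  exact ⟨p, y, hpform, hlamp, hyV, hxeq⟩

lemma main_inj : ∀ k : ℕ, k ≤ n → ∀ x : SForm n, IsForm k x → (Lop n)^[n-k] x = 0 → x = 0 := by
  intro k
  induction k using Nat.strong_induction_on with
  | _ k ih =>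
    intro hk x hx hL
    by_cases hk2 : k ≤ 1
    · exact prim_inj hk hx (lamF_eq_zero_of_low hk2 hx) hL
    · push_neg at hk2
      obtain ⟨p, y, hpform, hprim, hyform, hxeq⟩ := decomp (by omega) hx
      set m := n - k with hm
      obtain ⟨c, hc, hcp⟩ := prim_iter hk hpform hprim m le_rfl
      have hsipx : sip x ((lamF n)^[m] ((Lop n)^[m] p)) = 0 := by
        rw [← sip_Lop_iter, hL, sip_zero_left]
      rw [hcp, sip_smul_right] at hsipx
      have hxp : sip x p = 0 := by
        rcases mul_eq_zero.mp hsipx with h | h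
        · exact absurd h (ne_of_gt hc)
        · exact h
      have hyp : sip (Lop n y) p = 0 := by
        rw [sip_Lop, hprim, sip_zero_right]
      have hpp : sip p p = 0 := by
        have h1 : sip x p = sip p p + sip (Lop n y) p := by
          rw [hxeq, sip_add_left]
        rw [hxp, hyp, add_zero] at h1
        exact h1.symm
      have hp0 : p = 0 := sip_self_eq_zero hpp
      have hxLy : x = Lop n y := by rw [hxeq, hp0, zero_add]
      have hLy : (Lop n)^[n-(k-2)] y = 0 := by
        have h1 : n - (k-2) = (m + 1) + 1 := by omega
        rw [h1, Function.iterate_succ_apply (Lop n) (m+1) y, ← hxLy,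
          Function.iterate_succ_apply' (Lop n) m x, hL, Lop_zero]
      have hy0 : y = 0 := ih (k-2) (by omega) (by omega) y hyform hLy
      rw [hxLy, hy0, Lop_zero]
lemma wedge_omegaPow (m : ℕ) (x : SForm n) :
    wedge (omegaPow n m) x = (Lop n)^[m] x := by
  induction m generalizing x with
  | zero =>
    show wedge (sOne n) x = x
    exact sOne_wedge x
  | succ m ih =>
    have h1 : omegaPow n (m+1) = wedge (omegaF n) (omegaPow n m) := by
      show (Lop n)^[m+1] (sOne n) = _
      rw [Function.iterate_succ_apply' (Lop n) m (sOne n)]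
      rfl
    rw [h1, wedge_assoc, ih, Function.iterate_succ_apply' (Lop n) m x]
    rfl

lemma sOne_isForm : IsForm 0 (sOne n) := by
  intro s hs
  rw [sOne] at hs
  by_cases h : s = ∅
  · rw [h, Finset.card_empty]
  · rw [if_neg h] at hs
    exact absurd rfl hs

lemma omegaPow_isForm (m : ℕ) : IsForm (2*m) (omegaPow n m) := by
  have := Lop_iter_isForm (sOne_isForm (n := n)) m
  rw [zero_add] at this
  exact this

/-- complementation, as a linear auto-equivalence -/
def complL (n : ℕ) : SForm n →ₗ[ℝ] SForm n where
  toFun x := fun s => x sᶜ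
  map_add' := fun _ _ => rfl
  map_smul' := fun _ _ => rfl

def complE (n : ℕ) : SForm n ≃ₗ[ℝ] SForm n :=
  LinearEquiv.ofLinear (complL n) (complL n)
    (by apply LinearMap.ext; intro x; funext s; show x sᶜᶜ = x s; rw [compl_compl])
    (by apply LinearMap.ext; intro x; funext s; show x sᶜᶜ = x s; rw [compl_compl])

lemma complE_apply (x : SForm n) (s : Finset (Fin (2*n))) : complE n x s = x sᶜ := rfl

lemma card_compl' (s : Finset (Fin (2*n))) : sᶜ.card = 2*n - s.card := by
  rw [Finset.card_compl, Fintype.card_fin]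

lemma map_complE_Vsub {j : ℕ} (hj : j ≤ 2*n) :
    Submodule.map (complE n : SForm n →ₗ[ℝ] SForm n) (Vsub n j) = Vsub n (2*n - j) := by
  apply le_antisymm
  · rintro _ ⟨y, hy, rfl⟩
    intro s hs
    have h1 := hy sᶜ hs
    have h2 := card_compl' (n := n) s
    have h3 : s.card ≤ 2*n := by
      have := Finset.card_le_univ s
      rwa [Fintype.card_fin] at this
    omega
  · intro x hx
    refine ⟨complE n x, ?_, ?_⟩
    · intro s hs
      have h1 : x sᶜ ≠ 0 := hs
      have h2 := hx sᶜ h1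
      have h3 := card_compl' (n := n) s
      have h4 : s.card ≤ 2*n := by
        have := Finset.card_le_univ s
        rwa [Fintype.card_fin] at this
      omega
    · funext s
      show x sᶜᶜ = x s
      rw [compl_compl]

lemma finrank_Vsub_eq (k : ℕ) (hk : k ≤ 2*n) :
    Module.finrank ℝ (Vsub n k) = Module.finrank ℝ (Vsub n (2*n - k)) := by
  rw [← map_complE_Vsub hk]
  exact (LinearEquiv.finrank_map_eq (complE n) (Vsub n k)).symm
end HL

/-- Lefschetz isomorphism: for `0 ≤ k ≤ n`, the map `x ↦ ω^{n−k} ∧ x`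
restricts to a bijection from the `k`-forms onto the `(2n−k)`-forms. -/
theorem lefschetz_bijOn (n k : ℕ) (hn : 1 ≤ n) (hk : k ≤ n) :
    Set.BijOn (fun x : SForm n => wedge (omegaPow n (n - k)) x)
      {x : SForm n | IsForm k x} {y : SForm n | IsForm (2 * n - k) y} := by
  classical
  have hkey : 2 * (n - k) + k = 2 * n - k := by omega
  have hmaps : ∀ x : SForm n, IsForm k x → IsForm (2*n - k) ((Lop n)^[n-k] x) := by
    intro x hx
    have := HL.Lop_iter_isForm hx (n-k)
    rw [show k + 2*(n-k) = 2*n - k by omega] at this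
    exact this
  constructor
  · intro x hx
    rw [Set.mem_setOf_eq] at hx ⊢
    show IsForm (2*n - k) (wedge (omegaPow n (n - k)) x)
    rw [HL.wedge_omegaPow]
    exact hmaps x hx
  constructor
  · intro x1 hx1 x2 hx2 heq
    rw [Set.mem_setOf_eq] at hx1 hx2
    simp only [HL.wedge_omegaPow] at heq
    have hsub : (Lop n)^[n-k] (x1 - x2) = 0 := by
      have h1 : x1 - x2 + x2 = x1 := by abel
      have h2 := HL.Lop_iter_add (n := n) (n-k) (x1 - x2) x2
      rw [h1, heq] at h2
      have := h2.symm
      rwa [add_eq_right] at this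
    have := HL.main_inj k hk (x1 - x2) (HL.isForm_sub hx1 hx2) hsub
    exact sub_eq_zero.mp this
  · intro y hy
    rw [Set.mem_setOf_eq] at hy
    have hres : ∀ z ∈ HL.Vsub n k, ((HL.Llin n)^(n-k)) z ∈ HL.Vsub n (2*n - k) := by
      intro z hz
      rw [Module.End.pow_apply]
      exact hmaps z hz
    set T := ((HL.Llin n)^(n-k)).restrict hres with hT
    have hTinj : Function.Injective T := by
      intro a b hab
      have h1 : ((HL.Llin n)^(n-k)) a.1 = ((HL.Llin n)^(n-k)) b.1 := by
        have := congrArg Subtype.val hab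
        rwa [LinearMap.restrict_apply, LinearMap.restrict_apply] at this
      have h2 : ((HL.Llin n)^(n-k)) (a.1 - b.1) = 0 := by
        rw [map_sub, h1, sub_self]
      rw [Module.End.pow_apply] at h2
      have h3 := HL.main_inj k hk (a.1 - b.1) (HL.isForm_sub a.2 b.2) h2
      exact Subtype.ext (sub_eq_zero.mp h3)
    have hfr : Module.finrank ℝ (HL.Vsub n k) = Module.finrank ℝ (HL.Vsub n (2*n - k)) :=
      HL.finrank_Vsub_eq k (by omega)
    have hTsurj : Function.Surjective T :=
      (LinearMap.injective_iff_surjective_of_finrank_eq_finrank hfr).mp hTinj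
    obtain ⟨xbar, hxbar⟩ := hTsurj ⟨y, hy⟩
    refine ⟨xbar.1, xbar.2, ?_⟩
    show wedge (omegaPow n (n-k)) xbar.1 = y
    rw [HL.wedge_omegaPow]
    have h5 := congrArg Subtype.val hxbar
    have h6 : (HL.Llin n ^ (n-k)) xbar.1 = y := h5
    rw [Module.End.pow_apply] at h6
    exact h6
end
end

section
/- Every k-form x ∈ ⋀^k(ℝ^{2n}) can be written as x = x₀ + L x₁ + L² x₂ + … + L^s x_s for some s, where each x_j ∈ ⋀^{k−2j}(ℝ^{2n}) is primitive (Λ x_j = 0), and the terms L^j x_j of the sum are pairwise orthogonal. -/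
open scoped BigOperators

noncomputable section

namespace PD
variable {n : ℕ}

/-- basis monomial -/
def dl (n : ℕ) (t : Finset (Fin (2*n))) : SForm n := fun s => if s = t then 1 else 0

/-- the i-th pair -/
def P (n : ℕ) (i : Fin n) : Finset (Fin (2*n)) := {dxI n i, dxiI n i}

lemma dxI_ne_dxiI (i j : Fin n) : dxI n i ≠ dxiI n j := by
  simp only [dxI, dxiI, ne_eq, Fin.mk.injEq]; omega

lemma P_card (i : Fin n) : (P n i).card = 2 := by
  rw [P, Finset.card_insert_of_notMem (by simp [dxI_ne_dxiI]), Finset.card_singleton]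

lemma P_disjoint {i j : Fin n} (h : i ≠ j) : P n i ∩ P n j = ∅ := by
  ext v
  simp only [P, Finset.mem_inter, Finset.mem_insert, Finset.mem_singleton, Finset.notMem_empty,
    iff_false, not_and]
  have hij : i.1 ≠ j.1 := fun hh => h (Fin.ext hh)
  rintro (rfl | rfl) (hc | hc) <;>
    simp_all [dxI, dxiI, Fin.ext_iff] <;> omega

@[simp] lemma dxI_val (i : Fin n) : (dxI n i).1 = i.1 := rfl
@[simp] lemma dxiI_val (i : Fin n) : (dxiI n i).1 = n + i.1 := rfl

lemma mem_P_iff (i : Fin n) (v : Fin (2*n)) : v ∈ P n i ↔ v.1 = i.1 ∨ v.1 = n + i.1 := by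
  simp [P, dxI, dxiI, Fin.ext_iff]

/-- every index lies in exactly one pair -/
lemma sum_indicator_P (v : Fin (2*n)) :
    ∑ i : Fin n, (if v ∈ P n i then (1:ℕ) else 0) = 1 := by
  have hn : 0 < n := by
    rcases Nat.eq_zero_or_pos n with h | h
    · exact absurd v.2 (by omega)
    · exact h
  have hv := v.2
  rcases lt_or_ge v.1 n with hlt | hge
  · rw [Finset.sum_eq_single ⟨v.1, hlt⟩]
    · simp [mem_P_iff]
    · intro b _ hb
      simp only [mem_P_iff, ite_eq_right_iff]
      intro hc
      exfalso
      rcases hc with hc | hc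
      · exact hb (by apply Fin.ext; simp [← hc])
      · omega
    · simp
  · have hlt : v.1 - n < n := by omega
    rw [Finset.sum_eq_single ⟨v.1 - n, hlt⟩]
    · simp only [mem_P_iff, Fin.val_mk, if_pos (by omega : (v:ℕ) = (v:ℕ) - n ∨ (v:ℕ) = n + ((v:ℕ) - n))]
    · intro b _ hb
      simp only [mem_P_iff, ite_eq_right_iff]
      intro hc
      exfalso
      rcases hc with hc | hc
      · omega
      · exact hb (by apply Fin.ext; simp; omega)
    · simp

def inv (n : ℕ) (a u : Finset (Fin (2*n))) : ℕ :=
  ((a ×ˢ u).filter fun q => q.2 < q.1).card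

def eps (n : ℕ) (i : Fin n) (u : Finset (Fin (2*n))) : ℝ := (-1)^(inv n (P n i) u)

lemma inv_union {a u v : Finset (Fin (2*n))} (h : Disjoint u v) :
    inv n a (u ∪ v) = inv n a u + inv n a v := by
  unfold inv
  have hp : a ×ˢ (u ∪ v) = a ×ˢ u ∪ a ×ˢ v := by
    ext q; simp [Finset.mem_product, Finset.mem_union]
    try tauto
  rw [hp, Finset.filter_union, Finset.card_union_of_disjoint]
  refine Finset.disjoint_left.2 ?_
  intro q hq hq'
  simp only [Finset.mem_filter, Finset.mem_product] at hq hq'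
  exact (Finset.disjoint_left.1 h) hq.1.2 hq'.1.2

lemma inv_sdiff {a u p : Finset (Fin (2*n))} (h : p ⊆ u) :
    inv n a u = inv n a (u \ p) + inv n a p := by
  conv_lhs => rw [← Finset.sdiff_union_of_subset h]
  exact inv_union (Finset.sdiff_disjoint)

lemma inv_eq_sum (a u : Finset (Fin (2*n))) :
    inv n a u = ∑ p ∈ a, ∑ q ∈ u, (if q < p then 1 else 0) := by
  rw [inv, Finset.card_filter, Finset.sum_product]

lemma inv_P_P_odd {i j : Fin n} (h : i ≠ j) : Odd (inv n (P n i) (P n j)) := by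
  rw [inv_eq_sum]
  have hd1 : dxI n i ∉ ({dxiI n i} : Finset (Fin (2*n))) := by simp [dxI_ne_dxiI]
  rw [show P n i = insert (dxI n i) {dxiI n i} from rfl, Finset.sum_insert hd1,
    Finset.sum_singleton]
  have hd2 : dxI n j ∉ ({dxiI n j} : Finset (Fin (2*n))) := by simp [dxI_ne_dxiI]
  rw [show P n j = insert (dxI n j) {dxiI n j} from rfl, Finset.sum_insert hd2,
    Finset.sum_insert hd2, Finset.sum_singleton, Finset.sum_singleton]
  have hij : i.1 ≠ j.1 := fun hh => h (Fin.ext hh)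
  have e1 : (dxI n j < dxI n i) ↔ j.1 < i.1 := by simp only [Fin.lt_def, dxI_val]
  have e2 : ¬ (dxiI n j < dxI n i) := by simp only [Fin.lt_def, dxI_val, dxiI_val]; omega
  have e3 : (dxI n j < dxiI n i) := by simp only [Fin.lt_def, dxI_val, dxiI_val]; omega
  have e4 : (dxiI n j < dxiI n i) ↔ j.1 < i.1 := by simp only [Fin.lt_def, dxiI_val]; omega
  rcases lt_or_ge j.1 i.1 with hlt | hge
  · rw [if_pos (e1.2 hlt), if_neg e2, if_pos e3, if_pos (e4.2 hlt)]
    exact ⟨1, by ring⟩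
  · have hlt' : ¬ j.1 < i.1 := by omega
    rw [if_neg (fun hc => hlt' (e1.1 hc)), if_neg e2, if_pos e3,
      if_neg (fun hc => hlt' (e4.1 hc))]
    exact ⟨0, by ring⟩

lemma eps_sq (i : Fin n) (u : Finset (Fin (2*n))) : eps n i u * eps n i u = 1 := by
  rw [eps, ← pow_add, ← two_mul, pow_mul]; norm_num

lemma eps_sdiff {i j : Fin n} (h : i ≠ j) {u : Finset (Fin (2*n))} (hsub : P n j ⊆ u) :
    eps n i (u \ P n j) = - eps n i u := by
  obtain ⟨m, hm⟩ := inv_P_P_odd h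
  rw [eps, eps, inv_sdiff hsub, hm, pow_add, pow_succ, pow_mul]
  norm_num

lemma eps_union {i j : Fin n} (h : i ≠ j) {w : Finset (Fin (2*n))}
    (hd : P n i ∩ w = ∅) :
    eps n j (w ∪ P n i) = - eps n j w := by
  obtain ⟨m, hm⟩ := inv_P_P_odd (Ne.symm h)
  have hdis : Disjoint w (P n i) := Finset.disjoint_left.2 fun a haw hap =>
    (Finset.eq_empty_iff_forall_notMem.1 hd a) (Finset.mem_inter.2 ⟨hap, haw⟩)
  rw [eps, eps, inv_union hdis, hm, pow_add, pow_succ, pow_mul]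
  norm_num

lemma inv_singleton (a b : Fin (2*n)) :
    inv n {a} {b} = if b < a then 1 else 0 := by
  rw [inv_eq_sum, Finset.sum_singleton, Finset.sum_singleton]

lemma wedge_dx_dxi (i : Fin n) : wedge (sDx n i) (sDxi n i) = dl n (P n i) := by
  funext s
  unfold wedge sDx sDxi dl
  have h1 : ∀ a ∈ s.powerset,
      (-1:ℝ)^(((a ×ˢ (s \ a)).filter fun q => q.2 < q.1).card) *
        (if a = {dxI n i} then (1:ℝ) else 0) * (if s \ a = {dxiI n i} then (1:ℝ) else 0)
      = if a = {dxI n i} then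
          ((-1:ℝ)^(inv n a (s\a)) * (if s \ a = {dxiI n i} then (1:ℝ) else 0)) else 0 := by
    intro a _
    by_cases h : a = {dxI n i} <;> simp [h, inv]
  rw [Finset.sum_congr rfl h1, Finset.sum_ite_eq' s.powerset]
  by_cases hs : s = P n i
  · subst hs
    have hsub : ({dxI n i} : Finset (Fin (2*n))) ∈ (P n i).powerset := by
      simp [P, Finset.singleton_subset_iff]
    rw [if_pos hsub]
    have hdiff : P n i \ {dxI n i} = {dxiI n i} := by
      ext v
      simp only [P, Finset.mem_sdiff, Finset.mem_insert, Finset.mem_singleton]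
      constructor
      · rintro ⟨h1 | h1, h2⟩ <;> tauto
      · rintro rfl; exact ⟨Or.inr rfl, fun hc => dxI_ne_dxiI i i hc.symm⟩
    rw [hdiff, if_pos rfl, if_pos rfl, inv_singleton]
    have : ¬ (dxiI n i < dxI n i) := by
      simp only [Fin.lt_def, dxI_val, dxiI_val]; omega
    rw [if_neg this]; norm_num
  · rw [if_neg hs]
    by_cases hsub : ({dxI n i} : Finset (Fin (2*n))) ∈ s.powerset
    · rw [if_pos hsub]
      have : s \ {dxI n i} ≠ {dxiI n i} := by
        intro hc
        apply hs
        have := Finset.sdiff_union_of_subset (Finset.mem_powerset.1 hsub)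
        rw [hc] at this
        rw [← this]
        ext v; simp [P]; tauto
      rw [if_neg this, mul_zero]
    · rw [if_neg hsub]

lemma omegaF_apply (a : Finset (Fin (2*n))) :
    omegaF n a = ∑ i : Fin n, (if a = P n i then (1:ℝ) else 0) := by
  rw [omegaF, Finset.sum_congr rfl (fun i _ => wedge_dx_dxi i), Finset.sum_apply]
  rfl

lemma Lop_apply (x : SForm n) (t : Finset (Fin (2*n))) :
    Lop n x t = ∑ i : Fin n,
      (if P n i ⊆ t then eps n i (t \ P n i) * x (t \ P n i) else 0) := by
  rw [Lop, wedge]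
  have h1 : ∀ a ∈ t.powerset,
      (-1:ℝ)^(((a ×ˢ (t \ a)).filter fun q => q.2 < q.1).card) * omegaF n a * x (t \ a)
      = ∑ i : Fin n, (if a = P n i then (-1:ℝ)^(inv n a (t\a)) * x (t \ a) else 0) := by
    intro a _
    rw [omegaF_apply, Finset.mul_sum, Finset.sum_mul]
    refine Finset.sum_congr rfl (fun i _ => ?_)
    by_cases h : a = P n i <;> simp [h, inv]
  rw [Finset.sum_congr rfl h1, Finset.sum_comm]
  refine Finset.sum_congr rfl (fun i _ => ?_)
  rw [Finset.sum_ite_eq' t.powerset]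
  by_cases h : P n i ⊆ t
  · rw [if_pos (Finset.mem_powerset.2 h), if_pos h]; rfl
  · rw [if_neg (fun hc => h (Finset.mem_powerset.1 hc)), if_neg h]

lemma sip_comm (x y : SForm n) : sip x y = sip y x :=
  Finset.sum_congr rfl (fun s _ => mul_comm _ _)

lemma sip_dl_left (t : Finset (Fin (2*n))) (z : SForm n) : sip (dl n t) z = z t := by
  rw [sip, Finset.sum_eq_single t]
  · simp [dl]
  · intro b _ hb; simp [dl, hb]
  · simp

lemma sip_dl_right (t : Finset (Fin (2*n))) (z : SForm n) : sip z (dl n t) = z t := by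
  rw [sip_comm]; exact sip_dl_left t z

section Lam
variable (Lam : SForm n → SForm n)
  (hLam : ∀ x y : SForm n, sip (Lop n x) y = sip x (Lam y))

include hLam

lemma Lam_eq (y : SForm n) (t : Finset (Fin (2*n))) :
    Lam y t = sip y (Lop n (dl n t)) := by
  have h := hLam (dl n t) y
  rw [sip_dl_left] at h
  rw [← h, sip_comm]

omit hLam in
lemma union_sdiff_P {i : Fin n} {t : Finset (Fin (2*n))} (hd : P n i ∩ t = ∅) :
    (t ∪ P n i) \ P n i = t := by
  rw [Finset.union_sdiff_cancel_right]
  exact Finset.disjoint_left.2 fun a hat hap =>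
    (Finset.eq_empty_iff_forall_notMem.1 hd a) (Finset.mem_inter.2 ⟨hap, hat⟩)

omit hLam in
lemma sdiff_eq_imp {i : Fin n} {s t : Finset (Fin (2*n))} (hsub : P n i ⊆ s)
    (hst : s \ P n i = t) : s = t ∪ P n i ∧ P n i ∩ t = ∅ := by
  constructor
  · rw [← hst, Finset.sdiff_union_of_subset hsub]
  · rw [← hst]
    ext v; simp only [Finset.mem_inter, Finset.mem_sdiff, Finset.notMem_empty, iff_false,
      not_and]
    tauto

lemma Lam_apply (y : SForm n) (t : Finset (Fin (2*n))) :
    Lam y t = ∑ i : Fin n,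
      (if P n i ∩ t = ∅ then eps n i t * y (t ∪ P n i) else 0) := by
  rw [Lam_eq Lam hLam, sip]
  have h1 : ∀ s : Finset (Fin (2*n)),
      y s * Lop n (dl n t) s
      = ∑ i : Fin n, (if s = t ∪ P n i then
          (if P n i ∩ t = ∅ then eps n i t * y (t ∪ P n i) else 0) else 0) := by
    intro s
    rw [Lop_apply, Finset.mul_sum]
    refine Finset.sum_congr rfl (fun i _ => ?_)
    by_cases hsub : P n i ⊆ s
    · rw [if_pos hsub]
      by_cases hst : s \ P n i = t
      · obtain ⟨hs1, hs2⟩ := sdiff_eq_imp hsub hst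
        rw [if_pos hs1, if_pos hs2, hst, dl, if_pos rfl, ← hs1]
        ring
      · rw [dl, if_neg hst, mul_zero, mul_zero]
        by_cases hs1 : s = t ∪ P n i
        · subst hs1
          by_cases hs2 : P n i ∩ t = ∅
          · exact absurd (union_sdiff_P hs2) hst
          · rw [if_pos rfl, if_neg hs2]
        · rw [if_neg hs1]
    · rw [if_neg hsub, mul_zero]
      by_cases hs1 : s = t ∪ P n i
      · subst hs1
        exact absurd (Finset.subset_union_right) hsub
      · rw [if_neg hs1]
  rw [Finset.sum_congr rfl (fun s _ => h1 s), Finset.sum_comm]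
  refine Finset.sum_congr rfl (fun i _ => ?_)
  rw [Finset.sum_ite_eq' Finset.univ]
  simp

end Lam

lemma card_union_P {i : Fin n} {t : Finset (Fin (2*n))} (hd : P n i ∩ t = ∅) :
    (t ∪ P n i).card = t.card + 2 := by
  rw [Finset.card_union_of_disjoint, P_card]
  exact Finset.disjoint_left.2 fun a hat hap =>
    (Finset.eq_empty_iff_forall_notMem.1 hd a) (Finset.mem_inter.2 ⟨hap, hat⟩)

lemma card_sdiff_P {i : Fin n} {t : Finset (Fin (2*n))} (hsub : P n i ⊆ t) :
    (t \ P n i).card = t.card - 2 := by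
  rw [Finset.card_sdiff_of_subset hsub, P_card]

lemma IsForm_Lop {m : ℕ} {x : SForm n} (hx : IsForm m x) : IsForm (m+2) (Lop n x) := by
  intro t ht
  rw [Lop_apply] at ht
  obtain ⟨i, _, hi⟩ := Finset.exists_ne_zero_of_sum_ne_zero ht
  by_cases hsub : P n i ⊆ t
  · rw [if_pos hsub] at hi
    have hxne : x (t \ P n i) ≠ 0 := fun hc => hi (by rw [hc, mul_zero])
    have := hx _ hxne
    rw [card_sdiff_P hsub] at this
    have h2 : 2 ≤ t.card := le_trans (le_of_eq (P_card i).symm) (Finset.card_le_card hsub)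
    omega
  · rw [if_neg hsub] at hi; exact absurd rfl hi

lemma Lpow_succ (m : ℕ) (x : SForm n) : Lpow n (m+1) x = Lop n (Lpow n m x) := by
  rw [Lpow, Lpow, Function.iterate_succ_apply']

lemma Lpow_zero (x : SForm n) : Lpow n 0 x = x := rfl

lemma IsForm_Lpow {m : ℕ} {x : SForm n} (hx : IsForm m x) (j : ℕ) :
    IsForm (m + 2*j) (Lpow n j x) := by
  induction j with
  | zero => simpa [Lpow_zero] using hx
  | succ j ih =>
      rw [Lpow_succ]
      have := IsForm_Lop ih
      have he : m + 2*j + 2 = m + 2*(j+1) := by omega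
      rwa [he] at this

lemma IsForm_zero (m : ℕ) : IsForm m (0 : SForm n) := fun s hs => absurd rfl hs

lemma sip_degree_ne {p q : ℕ} {x y : SForm n} (hx : IsForm p x) (hy : IsForm q y)
    (h : p ≠ q) : sip x y = 0 := by
  rw [sip]
  refine Finset.sum_eq_zero (fun s _ => ?_)
  by_cases hxs : x s = 0
  · rw [hxs, zero_mul]
  · by_cases hys : y s = 0
    · rw [hys, mul_zero]
    · exact absurd ((hx s hxs).symm.trans (hy s hys)) h

lemma Lop_add (x y : SForm n) : Lop n (x + y) = Lop n x + Lop n y := by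
  funext t
  show Lop n (x+y) t = Lop n x t + Lop n y t
  rw [Lop_apply, Lop_apply, Lop_apply, ← Finset.sum_add_distrib]
  refine Finset.sum_congr rfl (fun i _ => ?_)
  by_cases h : P n i ⊆ t <;> simp [h, Pi.add_apply, mul_add]

lemma Lop_smul (c : ℝ) (x : SForm n) : Lop n (c • x) = c • Lop n x := by
  funext t
  show Lop n (c • x) t = c * Lop n x t
  rw [Lop_apply, Lop_apply, Finset.mul_sum]
  refine Finset.sum_congr rfl (fun i _ => ?_)
  by_cases h : P n i ⊆ t <;> simp [h, Pi.smul_apply] <;> ring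

lemma Lop_zero : Lop n (0 : SForm n) = 0 := by
  funext t
  show Lop n (0 : SForm n) t = 0
  rw [Lop_apply]
  refine Finset.sum_eq_zero (fun i _ => ?_)
  by_cases h : P n i ⊆ t <;> simp [h]

lemma Lop_sum {α : Type*} (s : Finset α) (f : α → SForm n) :
    Lop n (∑ a ∈ s, f a) = ∑ a ∈ s, Lop n (f a) := by
  classical
  induction s using Finset.induction_on with
  | empty => simpa using Lop_zero
  | insert _ _ hns ih => rw [Finset.sum_insert hns, Finset.sum_insert hns, Lop_add, ih]

lemma sip_smul_right (c : ℝ) (x y : SForm n) : sip x (c • y) = c * sip x y := by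
  rw [sip, sip, Finset.mul_sum]
  refine Finset.sum_congr rfl (fun s _ => ?_)
  simp [Pi.smul_apply]; ring

lemma filter_card_inter (i : Fin n) (t : Finset (Fin (2*n))) :
    (P n i ∩ t).card = ∑ v ∈ t, (if v ∈ P n i then 1 else 0) := by
  rw [Finset.inter_comm, ← Finset.filter_mem_eq_inter, Finset.card_filter]

lemma sum_card_inter (t : Finset (Fin (2*n))) :
    ∑ i : Fin n, (P n i ∩ t).card = t.card := by
  rw [Finset.sum_congr rfl (fun i _ => filter_card_inter i t), Finset.sum_comm]
  rw [Finset.sum_congr rfl (fun v _ => sum_indicator_P v)]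
  simp

lemma count_lemma (t : Finset (Fin (2*n))) :
    ∑ i : Fin n, ((if P n i ∩ t = ∅ then (1:ℝ) else 0) - (if P n i ⊆ t then 1 else 0))
    = (n:ℝ) - t.card := by
  have h1 : ∀ i : Fin n,
      ((if P n i ∩ t = ∅ then (1:ℝ) else 0) - (if P n i ⊆ t then 1 else 0))
      = 1 - ((P n i ∩ t).card : ℝ) := by
    intro i
    have hle : (P n i ∩ t).card ≤ 2 := le_trans (Finset.card_le_card
      Finset.inter_subset_left) (le_of_eq (P_card i))
    by_cases h0 : P n i ∩ t = ∅
    · rw [if_pos h0, h0]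
      have hne : P n i ⊆ t → False := by
        intro hc
        have h' : P n i ∩ t = P n i := Finset.inter_eq_left.2 hc
        have h2 : (P n i).card = 0 := by rw [← h', h0]; rfl
        rw [P_card] at h2; omega
      rw [if_neg hne]; simp
    · rw [if_neg h0]
      by_cases h2 : P n i ⊆ t
      · rw [if_pos h2, Finset.inter_eq_left.2 h2, P_card]; norm_num
      · rw [if_neg h2]
        have hne2 : (P n i ∩ t).card ≠ 2 := by
          intro hc
          apply h2
          have h3 := Finset.eq_of_subset_of_card_le
            (Finset.inter_subset_left : P n i ∩ t ⊆ P n i) (by rw [hc, P_card])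
          rw [← h3]
          exact Finset.inter_subset_right
        have hne0 : (P n i ∩ t).card ≠ 0 := fun hc => h0 (Finset.card_eq_zero.1 hc)
        have : (P n i ∩ t).card = 1 := by omega
        rw [this]; norm_num
  rw [Finset.sum_congr rfl (fun i _ => h1 i), Finset.sum_sub_distrib]
  have := sum_card_inter t
  have hc : ∑ i : Fin n, ((P n i ∩ t).card : ℝ) = (t.card : ℝ) := by
    rw [← Nat.cast_sum, this]
  rw [hc]
  simp

section Lam2
variable (Lam : SForm n → SForm n)
  (hLam : ∀ x y : SForm n, sip (Lop n x) y = sip x (Lam y))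
include hLam

lemma IsForm_Lam {m : ℕ} {y : SForm n} (hy : IsForm m y) : IsForm (m-2) (Lam y) := by
  intro t ht
  rw [Lam_apply Lam hLam] at ht
  obtain ⟨i, _, hi⟩ := Finset.exists_ne_zero_of_sum_ne_zero ht
  by_cases hd : P n i ∩ t = ∅
  · rw [if_pos hd] at hi
    have hyne : y (t ∪ P n i) ≠ 0 := fun hc => hi (by rw [hc, mul_zero])
    have := hy _ hyne
    rw [card_union_P hd] at this
    omega
  · rw [if_neg hd] at hi; exact absurd rfl hi

lemma Lam_zero_of_small {m : ℕ} (hm : m < 2) {y : SForm n} (hy : IsForm m y) :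
    Lam y = 0 := by
  funext t
  show Lam y t = 0
  rw [Lam_apply Lam hLam]
  refine Finset.sum_eq_zero (fun i _ => ?_)
  by_cases hd : P n i ∩ t = ∅
  · rw [if_pos hd]
    have : y (t ∪ P n i) = 0 := by
      by_contra hc
      have := hy _ hc
      rw [card_union_P hd] at this
      omega
    rw [this, mul_zero]
  · rw [if_neg hd]

lemma commutator {m : ℕ} {x : SForm n} (hx : IsForm m x) :
    Lam (Lop n x) = Lop n (Lam x) + (((n:ℝ) - m) • x) := by
  funext t
  show Lam (Lop n x) t = Lop n (Lam x) t + ((n:ℝ) - m) * x t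
  -- the two double sums
  have hG1 : Lam (Lop n x) t = ∑ i : Fin n, ∑ j : Fin n,
      (if P n i ∩ t = ∅ ∧ P n j ⊆ t ∪ P n i then
        eps n i t * (eps n j ((t ∪ P n i) \ P n j) * x ((t ∪ P n i) \ P n j)) else 0) := by
    rw [Lam_apply Lam hLam]
    refine Finset.sum_congr rfl (fun i _ => ?_)
    by_cases hd : P n i ∩ t = ∅
    · rw [if_pos hd, Lop_apply, Finset.mul_sum]
      refine Finset.sum_congr rfl (fun j _ => ?_)
      by_cases hj : P n j ⊆ t ∪ P n i
      · rw [if_pos hj, if_pos ⟨hd, hj⟩]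
      · rw [if_neg hj, if_neg (fun hc => hj hc.2), mul_zero]
    · rw [if_neg hd]
      exact (Finset.sum_eq_zero (fun j _ => by
        rw [if_neg (fun hc => hd hc.1)])).symm
  have hG2 : Lop n (Lam x) t = ∑ i : Fin n, ∑ j : Fin n,
      (if P n j ⊆ t ∧ P n i ∩ (t \ P n j) = ∅ then
        eps n j (t \ P n j) * (eps n i (t \ P n j) * x ((t \ P n j) ∪ P n i)) else 0) := by
    rw [Lop_apply, Finset.sum_comm]
    refine Finset.sum_congr rfl (fun j _ => ?_)
    by_cases hj : P n j ⊆ t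
    · rw [if_pos hj, Lam_apply Lam hLam, Finset.mul_sum]
      refine Finset.sum_congr rfl (fun i _ => ?_)
      by_cases hd : P n i ∩ (t \ P n j) = ∅
      · rw [if_pos hd, if_pos ⟨hj, hd⟩]
      · rw [if_neg hd, if_neg (fun hc => hd hc.2), mul_zero]
    · rw [if_neg hj]
      exact (Finset.sum_eq_zero (fun i _ => by
        rw [if_neg (fun hc => hj hc.1)])).symm
  rw [hG1, hG2]
  rw [← sub_eq_iff_eq_add', ← Finset.sum_sub_distrib]
  have hdiag : ∀ i : Fin n,
      (∑ j : Fin n, (if P n i ∩ t = ∅ ∧ P n j ⊆ t ∪ P n i then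
          eps n i t * (eps n j ((t ∪ P n i) \ P n j) * x ((t ∪ P n i) \ P n j)) else 0))
      - (∑ j : Fin n, (if P n j ⊆ t ∧ P n i ∩ (t \ P n j) = ∅ then
          eps n j (t \ P n j) * (eps n i (t \ P n j) * x ((t \ P n j) ∪ P n i)) else 0))
      = ((if P n i ∩ t = ∅ then (1:ℝ) else 0) - (if P n i ⊆ t then 1 else 0)) * x t := by
    intro i
    have hoff : ∀ j ∈ Finset.univ, j ≠ i →
        ((if P n i ∩ t = ∅ ∧ P n j ⊆ t ∪ P n i then
          eps n i t * (eps n j ((t ∪ P n i) \ P n j) * x ((t ∪ P n i) \ P n j)) else 0)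
        - (if P n j ⊆ t ∧ P n i ∩ (t \ P n j) = ∅ then
          eps n j (t \ P n j) * (eps n i (t \ P n j) * x ((t \ P n j) ∪ P n i)) else 0)) = 0 := by
      intro j _ hji
      have hij : i ≠ j := fun hc => hji hc.symm
      have hdisj : ∀ v, v ∈ P n i → v ∉ P n j := fun v hv hc =>
        (Finset.eq_empty_iff_forall_notMem.1 (P_disjoint hij) v)
          (Finset.mem_inter.2 ⟨hv, hc⟩)
      rw [sub_eq_zero]
      by_cases hc1 : P n i ∩ t = ∅ ∧ P n j ⊆ t ∪ P n i
      · obtain ⟨hd, hj⟩ := hc1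
        have hjt : P n j ⊆ t := by
          intro v hv
          rcases Finset.mem_union.1 (hj hv) with h | h
          · exact h
          · exact absurd hv (hdisj v h)
        have hd2 : P n i ∩ (t \ P n j) = ∅ := by
          refine Finset.eq_empty_iff_forall_notMem.2 (fun v hv => ?_)
          rw [Finset.mem_inter, Finset.mem_sdiff] at hv
          exact (Finset.eq_empty_iff_forall_notMem.1 hd v)
            (Finset.mem_inter.2 ⟨hv.1, hv.2.1⟩)
        have hseteq : (t ∪ P n i) \ P n j = (t \ P n j) ∪ P n i := by
          ext v
          simp only [Finset.mem_sdiff, Finset.mem_union]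
          constructor
          · rintro ⟨h1 | h1, h2⟩
            · exact Or.inl ⟨h1, h2⟩
            · exact Or.inr h1
          · rintro (⟨h1, h2⟩ | h1)
            · exact ⟨Or.inl h1, h2⟩
            · exact ⟨Or.inr h1, hdisj v h1⟩
        rw [if_pos ⟨hd, hj⟩, if_pos ⟨hjt, hd2⟩, hseteq, eps_union hij hd2,
          eps_sdiff hij hjt]
        ring
      · have hc2 : ¬ (P n j ⊆ t ∧ P n i ∩ (t \ P n j) = ∅) := by
          intro ⟨hjt, hd2⟩
          apply hc1
          constructor
          · refine Finset.eq_empty_iff_forall_notMem.2 (fun v hv => ?_)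
            rw [Finset.mem_inter] at hv
            exact (Finset.eq_empty_iff_forall_notMem.1 hd2 v)
              (Finset.mem_inter.2 ⟨hv.1, Finset.mem_sdiff.2 ⟨hv.2, hdisj v hv.1⟩⟩)
          · exact hjt.trans Finset.subset_union_left
        rw [if_neg hc1, if_neg hc2]
    rw [← Finset.sum_sub_distrib, Finset.sum_eq_single_of_mem i (Finset.mem_univ i) hoff]
    have hsub2 : P n i ⊆ t ∪ P n i := Finset.subset_union_right
    have hd2 : P n i ∩ (t \ P n i) = ∅ := by
      refine Finset.eq_empty_iff_forall_notMem.2 (fun v hv => ?_)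
      rw [Finset.mem_inter, Finset.mem_sdiff] at hv
      exact hv.2.2 hv.1
    by_cases h0 : P n i ∩ t = ∅
    · rw [if_pos ⟨h0, hsub2⟩, if_pos h0, union_sdiff_P h0]
      by_cases h2 : P n i ⊆ t
      · rw [if_pos ⟨h2, hd2⟩, if_pos h2, Finset.sdiff_union_of_subset h2,
          ← mul_assoc, eps_sq, ← mul_assoc, eps_sq]
        ring
      · rw [if_neg (fun hc => h2 hc.1), if_neg h2, ← mul_assoc, eps_sq]
        ring
    · rw [if_neg (fun hc => h0 hc.1), if_neg h0]
      by_cases h2 : P n i ⊆ t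
      · rw [if_pos ⟨h2, hd2⟩, if_pos h2, Finset.sdiff_union_of_subset h2,
          ← mul_assoc, eps_sq]
        ring
      · rw [if_neg (fun hc => h2 hc.1), if_neg h2]
        ring
  rw [Finset.sum_congr rfl (fun i _ => hdiag i), ← Finset.sum_mul, count_lemma]
  by_cases hxt : x t = 0
  · rw [hxt, mul_zero, mul_zero]
  · rw [hx t hxt]

omit hLam in
lemma sip_zero_right (x : SForm n) : sip x 0 = 0 := by
  simp [sip]

lemma Lam_Lpow {d : ℕ} {p : SForm n} (hp : IsForm d p) (hprim : Lam p = 0) :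
    ∀ m : ℕ, ∃ c : ℝ, Lam (Lpow n m p) = c • Lpow n (m-1) p := by
  intro m
  induction m with
  | zero => exact ⟨0, by rw [Lpow_zero, hprim, zero_smul]⟩
  | succ m ih =>
      obtain ⟨c, hc⟩ := ih
      rw [Lpow_succ, commutator Lam hLam (IsForm_Lpow hp m)]
      match m with
      | 0 =>
          refine ⟨(n:ℝ) - d, ?_⟩
          rw [Lpow_zero] at hc ⊢
          rw [hprim, Lop_zero, zero_add]
          simp
      | Nat.succ m' =>
          refine ⟨c + ((n:ℝ) - (d + 2*(m'+1))), ?_⟩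
          rw [hc, Lop_smul]
          have : Nat.succ m' - 1 = m' := rfl
          rw [this, ← Lpow_succ]
          have h2 : Nat.succ m' + 1 - 1 = Nat.succ m' := rfl
          rw [h2, add_smul]
          have h3 : ((n:ℝ) - ((d:ℝ) + 2*((m':ℝ)+1))) = ((n:ℝ) - ((d + 2*(m'+1) : ℕ) : ℝ)) := by
            push_cast; ring
          rw [h3]

lemma orth_lemma {da db : ℕ} {a b : SForm n} (hpa : Lam a = 0)
    (hb : IsForm db b) (hpb : Lam b = 0) :
    ∀ i j : ℕ, i < j → sip (Lpow n i a) (Lpow n j b) = 0 := by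
  intro i
  induction i generalizing b db with
  | zero =>
      intro j hj
      obtain ⟨j', rfl⟩ : ∃ j', j = j' + 1 := ⟨j - 1, by omega⟩
      rw [Lpow_zero, Lpow_succ, sip_comm, hLam, hpa, sip_zero_right]
  | succ i ih =>
      intro j hj
      obtain ⟨j', rfl⟩ : ∃ j', j = j' + 1 := ⟨j - 1, by omega⟩
      obtain ⟨c, hc⟩ := Lam_Lpow Lam hLam hb hpb (j' + 1)
      rw [Lpow_succ, hLam, hc]
      have : j' + 1 - 1 = j' := rfl
      rw [this, sip_smul_right, ih hb hpb j' (by omega), mul_zero]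

omit hLam in
lemma IsForm_dl (t : Finset (Fin (2*n))) : IsForm t.card (dl n t) := by
  intro s hs
  by_cases h : s = t
  · rw [h]
  · rw [dl, if_neg h] at hs; exact absurd rfl hs

omit hLam in
lemma sip_eq_inner (x y : SForm n) :
    sip x y = @inner ℝ _ _ (WithLp.toLp 2 x : EuclideanSpace ℝ (Finset (Fin (2*n))))
      (WithLp.toLp 2 y : EuclideanSpace ℝ (Finset (Fin (2*n)))) := by
  rw [sip, PiLp.inner_apply]
  refine Finset.sum_congr rfl (fun s _ => ?_)
  simp [RCLike.inner_apply, mul_comm]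

lemma step {k : ℕ} (hk : 2 ≤ k) (x : SForm n) (hx : IsForm k x) :
    ∃ (p y : SForm n), IsForm k p ∧ Lam p = 0 ∧ IsForm (k-2) y ∧ x = p + Lop n y := by
  classical
  set E := EuclideanSpace ℝ (Finset (Fin (2*n))) with hE
  let LopL : E →ₗ[ℝ] E :=
    { toFun := fun v => WithLp.toLp 2 (Lop n v.ofLp)
      map_add' := fun a b => congrArg (WithLp.toLp 2) (Lop_add a.ofLp b.ofLp)
      map_smul' := fun c a => congrArg (WithLp.toLp 2) (Lop_smul c a.ofLp) }
  let D : Submodule ℝ E :=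
    { carrier := { v | IsForm (k-2) v.ofLp }
      add_mem' := by
        intro a b ha hb s hs
        by_cases h1 : a s = 0
        · by_cases h2 : b s = 0
          · exact absurd (show a.ofLp s + b.ofLp s = 0 by rw [h1, h2, add_zero]) hs
          · exact hb s h2
        · exact ha s h1
      zero_mem' := fun s hs => absurd rfl hs
      smul_mem' := by
        intro c a ha s hs
        refine ha s (fun h1 => hs ?_)
        show c * a.ofLp s = 0
        rw [h1, mul_zero] }
  let W : Submodule ℝ E := D.map LopL
  obtain ⟨w, hw, p, hp, hxwp⟩ := W.exists_add_mem_mem_orthogonal (WithLp.toLp 2 x : E)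
  obtain ⟨y, hy, hwy⟩ := hw
  have hyform : IsForm (k-2) y.ofLp := hy
  have hLopy : Lop n y.ofLp = w.ofLp := congrArg WithLp.ofLp hwy
  have hpx : (p.ofLp : SForm n) = x - Lop n y.ofLp := by
    rw [hLopy]
    have : (x : SForm n) = w.ofLp + p.ofLp := congrArg WithLp.ofLp hxwp
    rw [this]
    abel
  have hLopyform : IsForm k (Lop n y.ofLp) := by
    have := IsForm_Lop hyform
    have he : k - 2 + 2 = k := by omega
    rwa [he] at this
  have hpform : IsForm k p.ofLp := by
    intro s hs
    rw [hpx] at hs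
    by_cases h1 : x s = 0
    · by_cases h2 : Lop n y.ofLp s = 0
      · exact absurd (show x s - Lop n y.ofLp s = 0 by rw [h1, h2, sub_zero]) hs
      · exact hLopyform s h2
    · exact hx s h1
  have hpprim : Lam p.ofLp = 0 := by
    funext t
    show Lam p.ofLp t = 0
    rw [Lam_eq Lam hLam]
    by_cases ht : t.card = k - 2
    · have hdl : (WithLp.toLp 2 (dl n t) : E) ∈ D := by
        show IsForm (k-2) (dl n t)
        rw [← ht]
        exact IsForm_dl t
      have hmem : (WithLp.toLp 2 (Lop n (dl n t)) : E) ∈ W := ⟨WithLp.toLp 2 (dl n t), hdl, rfl⟩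
      rw [sip_eq_inner, real_inner_comm]
      exact (Submodule.mem_orthogonal W p).1 hp _ hmem
    · refine sip_degree_ne hpform (IsForm_Lop (IsForm_dl t)) ?_
      omega
  exact ⟨p.ofLp, y.ofLp, hpform, hpprim, hyform, by rw [hpx]; abel⟩

lemma main_decomp : ∀ k : ℕ, ∀ x : SForm n, IsForm k x →
    ∃ (s : ℕ) (c : ℕ → SForm n),
      (∀ j ≤ s, Lam (c j) = 0 ∧ IsForm (k - 2 * j) (c j) ∧ (2 * j ≤ k ∨ c j = 0)) ∧
      x = ∑ j ∈ Finset.range (s + 1), Lpow n j (c j) ∧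
      (∀ i ≤ s, ∀ j ≤ s, i ≠ j → sip (Lpow n i (c i)) (Lpow n j (c j)) = 0) := by
  intro k
  induction k using Nat.strong_induction_on with
  | _ k IH =>
    intro x hx
    by_cases hk : k < 2
    · refine ⟨0, fun _ => x, ?_, ?_, ?_⟩
      · intro j hj
        have hj0 : j = 0 := by omega
        subst hj0
        exact ⟨Lam_zero_of_small Lam hLam hk hx, by simpa using hx, Or.inl (by omega)⟩
      · simp [Lpow_zero]
      · intro i hi j hj hij; omega
    · push_neg at hk
      obtain ⟨p, y, hpform, hpprim, hyform, hxeq⟩ := step Lam hLam hk x hx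
      obtain ⟨s', c', hc'1, hc'2, hc'3⟩ := IH (k-2) (by omega) y hyform
      set c : ℕ → SForm n := fun j => if j = 0 then p else c' (j-1) with hc
      have hcond : ∀ j ≤ s' + 1,
          Lam (c j) = 0 ∧ IsForm (k - 2 * j) (c j) ∧ (2 * j ≤ k ∨ c j = 0) := by
        intro j hj
        match j with
        | 0 =>
            refine ⟨hpprim, ?_, Or.inl (by omega)⟩
            simpa [hc] using hpform
        | Nat.succ j' =>
            have hj' : j' ≤ s' := by omega
            obtain ⟨h1, h2, h3⟩ := hc'1 j' hj'
            have hcj : c (j'+1) = c' j' := by simp [hc]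
            refine ⟨by rw [hcj]; exact h1, ?_, ?_⟩
            · rw [hcj]
              have he : k - 2 * (j' + 1) = k - 2 - 2 * j' := by omega
              rwa [he]
            · rcases h3 with h3 | h3
              · exact Or.inl (by omega)
              · exact Or.inr (by rw [hcj, h3])
      refine ⟨s' + 1, c, hcond, ?_, ?_⟩
      · rw [Finset.sum_range_succ']
        have h0 : Lpow n 0 (c 0) = p := by simp [hc, Lpow_zero]
        have h1 : ∀ i ∈ Finset.range (s' + 1), Lpow n (i+1) (c (i+1)) =
            Lop n (Lpow n i (c' i)) := by
          intro i _
          have : c (i+1) = c' i := by simp [hc]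
          rw [this, Lpow_succ]
        rw [h0, Finset.sum_congr rfl h1, ← Lop_sum, ← hc'2, hxeq]
        abel
      · have key : ∀ i ≤ s' + 1, ∀ j ≤ s' + 1, i < j →
            sip (Lpow n i (c i)) (Lpow n j (c j)) = 0 := by
          intro i hi j hj hij
          obtain ⟨hprim_i, hform_i, _⟩ := hcond i hi
          obtain ⟨hprim_j, hform_j, _⟩ := hcond j hj
          exact orth_lemma (da := k - 2 * i) Lam hLam hprim_i hform_j hprim_j i j hij
        intro i hi j hj hij
        rcases lt_or_gt_of_ne hij with h | h
        · exact key i hi j hj h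
        · rw [sip_comm]
          exact key j hj i hi h

end Lam2
end PD

/-- primitive decomposition: every `k`-form `x` can be written as
`x = x₀ + L x₁ + … + L^s x_s` with each `x_j` a primitive `(k−2j)`-form
(in particular `x_j = 0` whenever `2j > k`), the terms being pairwise orthogonal. -/
theorem primitive_decomposition (n : ℕ) (hn : 1 ≤ n)
    (Lam : SForm n → SForm n)
    (hLam : ∀ x y : SForm n, sip (Lop n x) y = sip x (Lam y))
    (k : ℕ) (x : SForm n) (hx : IsForm k x) :
    ∃ (s : ℕ) (c : ℕ → SForm n),
      (∀ j ≤ s, Lam (c j) = 0 ∧ IsForm (k - 2 * j) (c j) ∧ (2 * j ≤ k ∨ c j = 0)) ∧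
      x = ∑ j ∈ Finset.range (s + 1), Lpow n j (c j) ∧
      (∀ i ≤ s, ∀ j ≤ s, i ≠ j → sip (Lpow n i (c i)) (Lpow n j (c j)) = 0) := by
  exact PD.main_decomp Lam hLam k x hx
end
end

section
/- Let x ∈ ⋀^k(ℝ^{2n}) be a k-form with k ≤ n. (i) If L^{n−k+s} x = 0 for some integer s ≥ 1, then x = Σ_{0 ≤ j ≤ s−1} L^j x_j where each x_j ∈ ⋀^{k−2j}(ℝ^{2n}) is primitive. (ii) x is primitive (Λx = 0) if and only if L^{n−k+1} x = 0. -/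
open scoped BigOperators

noncomputable section

namespace Prim

variable {n : ℕ}

def P (n : ℕ) (i : Fin n) : Finset (Fin (2 * n)) := {dxI n i, dxiI n i}

def cnt (n : ℕ) (i : Fin n) (t : Finset (Fin (2 * n))) : ℕ :=
  (t.filter (· < dxI n i)).card + (t.filter (· < dxiI n i)).card

def eps (n : ℕ) (i : Fin n) (t : Finset (Fin (2 * n))) : ℝ := (-1) ^ (cnt n i t)

def delta (s : Finset (Fin (2 * n))) : SForm n := fun t => if t = s then 1 else 0

lemma dxI_ne_dxiI (i : Fin n) : dxI n i ≠ dxiI n i := by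
  simp only [dxI, dxiI, Ne, Fin.mk.injEq]; have := i.2; omega

lemma mem_P {i : Fin n} {b : Fin (2 * n)} : b ∈ P n i ↔ b = dxI n i ∨ b = dxiI n i := by
  simp [P]

lemma card_P (i : Fin n) : (P n i).card = 2 := by
  rw [P, Finset.card_insert_of_notMem (by simp [dxI_ne_dxiI i]), Finset.card_singleton]

lemma P_disjoint {i j : Fin n} (h : i ≠ j) : Disjoint (P n i) (P n j) := by
  rw [Finset.disjoint_left]
  intro b hb hb'
  rw [mem_P] at hb hb'
  have hij : i.1 ≠ j.1 := fun hc => h (Fin.ext hc)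
  have h1 := i.2; have h2 := j.2
  rcases hb with rfl | rfl <;> rcases hb' with hc | hc <;>
    · simp only [dxI, dxiI, Fin.mk.injEq] at hc; omega

lemma sgn_pair (i : Fin n) (t : Finset (Fin (2 * n))) :
    (((P n i) ×ˢ t).filter fun q => q.2 < q.1).card = cnt n i t := by
  classical
  rw [P, Finset.insert_eq, Finset.union_product, Finset.filter_union]
  rw [Finset.card_union_of_disjoint, Finset.singleton_product, Finset.singleton_product,
    Finset.filter_map, Finset.filter_map, Finset.card_map, Finset.card_map]
  · rfl
  · refine Finset.disjoint_left.2 ?_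
    rintro ⟨q1, q2⟩ hq hq'
    simp only [Finset.mem_filter, Finset.singleton_product, Finset.mem_map,
      Function.Embedding.coeFn_mk, Prod.mk.injEq] at hq hq'
    obtain ⟨⟨b, _, rfl, rfl⟩, _⟩ := hq
    obtain ⟨⟨b', _, hb', _⟩, _⟩ := hq'
    exact dxI_ne_dxiI i hb'.symm

lemma wedge_dx_dxi (i : Fin n) (a : Finset (Fin (2 * n))) :
    wedge (sDx n i) (sDxi n i) a = if a = P n i then 1 else 0 := by
  classical
  rw [wedge]
  by_cases ha : a = P n i
  · subst ha
    rw [if_pos rfl]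
    have hmem : ({dxI n i} : Finset (Fin (2*n))) ∈ (P n i).powerset := by
      simp [P, Finset.singleton_subset_iff]
    rw [Finset.sum_eq_single_of_mem _ hmem]
    · have h1 : P n i \ {dxI n i} = {dxiI n i} := by
        ext b; simp only [P, Finset.mem_sdiff, Finset.mem_insert, Finset.mem_singleton]
        constructor
        · rintro ⟨rfl | rfl, hb⟩
          · simp at hb
          · rfl
        · rintro rfl; exact ⟨Or.inr rfl, fun hc => dxI_ne_dxiI i hc.symm⟩
      rw [h1, sDx, sDxi, if_pos rfl, if_pos rfl]
      have h2 : ((({dxI n i} : Finset (Fin (2*n))) ×ˢ {dxiI n i}).filter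
          fun q => q.2 < q.1) = ∅ := by
        rw [Finset.singleton_product_singleton]
        refine Finset.filter_eq_empty_iff.2 ?_
        intro q hq; simp only [Finset.mem_singleton] at hq; subst hq
        simp only [not_lt]
        have := i.2
        exact le_of_lt (by simp only [dxI, dxiI, Fin.lt_def]; omega)
      rw [h2]; simp
    · intro b _ hb
      rw [sDx, if_neg hb]; ring
  · rw [if_neg ha]
    refine Finset.sum_eq_zero fun b hb => ?_
    rcases eq_or_ne b {dxI n i} with rfl | h1
    · rcases eq_or_ne (a \ {dxI n i}) {dxiI n i} with h2 | h2
      · exfalso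
        apply ha
        have : a = {dxI n i} ∪ (a \ {dxI n i}) := by
          rw [Finset.union_sdiff_of_subset (Finset.mem_powerset.1 hb)]
        rw [h2] at this
        rw [this]; rfl
      · rw [sDxi, if_neg h2]; ring
    · rw [sDx, if_neg h1]; ring

lemma lop_apply (x : SForm n) (s : Finset (Fin (2 * n))) :
    Lop n x s = ∑ i : Fin n,
      if P n i ⊆ s then eps n i (s \ P n i) * x (s \ P n i) else 0 := by
  classical
  rw [Lop, wedge]
  have h1 : ∀ a ∈ s.powerset,
      (-1 : ℝ) ^ (((a ×ˢ (s \ a)).filter fun q => q.2 < q.1).card) * omegaF n a * x (s \ a)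
      = ∑ i : Fin n, if a = P n i then
          (-1 : ℝ) ^ (((a ×ˢ (s \ a)).filter fun q => q.2 < q.1).card) * x (s \ a) else 0 := by
    intro a _
    rw [omegaF, Finset.sum_apply]
    rw [show (∑ i : Fin n, wedge (sDx n i) (sDxi n i) a)
        = ∑ i : Fin n, if a = P n i then (1:ℝ) else 0 from
      Finset.sum_congr rfl fun i _ => wedge_dx_dxi i a]
    rw [Finset.mul_sum, Finset.sum_mul]
    refine Finset.sum_congr rfl fun i _ => ?_
    by_cases h : a = P n i <;> simp [h]
  rw [Finset.sum_congr rfl h1, Finset.sum_comm]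
  refine Finset.sum_congr rfl fun i _ => ?_
  rw [Finset.sum_ite_eq' s.powerset (P n i)
    (fun a => (-1 : ℝ) ^ (((a ×ˢ (s \ a)).filter fun q => q.2 < q.1).card) * x (s \ a))]
  by_cases h : P n i ⊆ s
  · rw [if_pos (Finset.mem_powerset.2 h), if_pos h, sgn_pair]; rfl
  · rw [if_neg (fun hc => h (Finset.mem_powerset.1 hc)), if_neg h]

lemma cnt_union {i : Fin n} {t u : Finset (Fin (2 * n))} (h : Disjoint t u) :
    cnt n i (t ∪ u) = cnt n i t + cnt n i u := by
  rw [cnt, cnt, cnt, Finset.filter_union, Finset.filter_union,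
    Finset.card_union_of_disjoint (Finset.disjoint_filter_filter h),
    Finset.card_union_of_disjoint (Finset.disjoint_filter_filter h)]
  ring

lemma eps_union {i : Fin n} {t u : Finset (Fin (2 * n))} (h : Disjoint t u) :
    eps n i (t ∪ u) = eps n i t * eps n i u := by
  rw [eps, eps, eps, cnt_union h, pow_add]

lemma eps_mul_self (i : Fin n) (t : Finset (Fin (2 * n))) :
    eps n i t * eps n i t = 1 := by
  rw [eps, ← mul_pow]; norm_num

lemma cnt_P_pair (i j : Fin n) :
    cnt n i (P n j) = (if j.1 < i.1 then 1 else 0) + 1 + (if j.1 < i.1 then 1 else 0) := by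
  have hi := i.2; have hj := j.2
  have hb1 : ¬ (dxiI n j < dxI n i) := by
    simp only [dxI, dxiI, Fin.lt_def, not_lt]; omega
  have hb2 : dxI n j < dxiI n i := by
    simp only [dxI, dxiI, Fin.lt_def]; omega
  have he1 : (dxI n j < dxI n i) ↔ j.1 < i.1 := by
    simp only [dxI, Fin.lt_def]
  have he2 : (dxiI n j < dxiI n i) ↔ j.1 < i.1 := by
    simp only [dxiI, Fin.lt_def]; omega
  rw [cnt, P, Finset.filter_insert, Finset.filter_insert,
    Finset.filter_singleton, Finset.filter_singleton]
  rw [if_neg hb1, if_pos hb2]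
  by_cases h : j.1 < i.1
  · rw [if_pos (he1.2 h), if_pos (he2.2 h), if_pos h]
    rw [Finset.card_insert_of_notMem (by simp), Finset.card_insert_of_notMem
      (by simp [dxI_ne_dxiI j])]
    simp
  · rw [if_neg (fun hc => h (he1.1 hc)), if_neg (fun hc => h (he2.1 hc)), if_neg h]
    rw [Finset.card_insert_of_notMem (by simp)]
    simp

lemma eps_P_P (i j : Fin n) : eps n i (P n j) * eps n j (P n i) = 1 := by
  rw [eps, eps, ← pow_add]
  apply Even.neg_one_pow
  rw [cnt_P_pair, cnt_P_pair]
  by_cases h : j.1 < i.1 <;> by_cases h' : i.1 < j.1 <;> simp [h, h'] <;> decide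

lemma sip_delta (s : Finset (Fin (2 * n))) (y : SForm n) : sip (delta s) y = y s := by
  rw [sip]
  rw [show (fun t => delta s t * y t) = fun t => if t = s then y t else 0 by
    funext t; rw [delta]; by_cases h : t = s <;> simp [h]]
  rw [Finset.sum_ite_eq' Finset.univ s y, if_pos (Finset.mem_univ s)]

lemma lam_apply (Lam : SForm n → SForm n)
    (hLam : ∀ x y : SForm n, sip (Lop n x) y = sip x (Lam y))
    (y : SForm n) (s : Finset (Fin (2 * n))) :
    Lam y s = ∑ i : Fin n,
      if Disjoint (P n i) s then eps n i s * y (s ∪ P n i) else 0 := by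
  classical
  have h0 : Lam y s = sip (Lop n (delta s)) y := by rw [hLam, sip_delta]
  rw [h0, sip]
  have h1 : ∀ t, Lop n (delta s) t * y t
      = ∑ i : Fin n, if P n i ⊆ t ∧ t \ P n i = s then eps n i s * y t else 0 := by
    intro t
    rw [lop_apply, Finset.sum_mul]
    refine Finset.sum_congr rfl fun i _ => ?_
    by_cases h2 : P n i ⊆ t
    · rw [if_pos h2]
      by_cases h3 : t \ P n i = s
      · rw [if_pos ⟨h2, h3⟩, delta, h3, if_pos rfl]; ring
      · rw [if_neg (fun hc => h3 hc.2), delta, if_neg h3]; ring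
    · rw [if_neg h2, if_neg (fun hc => h2 hc.1), zero_mul]
  rw [Finset.sum_congr rfl fun t _ => h1 t, Finset.sum_comm]
  refine Finset.sum_congr rfl fun i _ => ?_
  by_cases hd : Disjoint (P n i) s
  · rw [if_pos hd]
    rw [Finset.sum_eq_single_of_mem (s ∪ P n i) (Finset.mem_univ _)]
    · rw [if_pos ⟨Finset.subset_union_right, Finset.union_sdiff_cancel_right hd.symm⟩]
    · intro t _ ht
      refine if_neg fun hc => ht ?_
      rw [← hc.2, Finset.sdiff_union_of_subset hc.1]
  · rw [if_neg hd]
    refine Finset.sum_eq_zero fun t _ => ?_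
    refine if_neg fun hc => hd ?_
    rw [← hc.2]
    exact (Finset.sdiff_disjoint).symm

def pidx (b : Fin (2 * n)) : Fin n :=
  if h : b.1 < n then ⟨b.1, h⟩ else ⟨b.1 - n, by have := b.2; omega⟩

lemma pidx_dxI (i : Fin n) : pidx (dxI n i) = i := by
  refine Fin.ext ?_
  rw [pidx, dif_pos (show (dxI n i).1 < n from i.2)]
  rfl

lemma pidx_dxiI (i : Fin n) : pidx (dxiI n i) = i := by
  refine Fin.ext ?_
  rw [pidx, dif_neg (show ¬ (dxiI n i).1 < n by simp [dxiI])]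
  simp [dxiI]

lemma mem_P_iff_pidx {b : Fin (2 * n)} {i : Fin n} : b ∈ P n i ↔ i = pidx b := by
  rw [mem_P]
  constructor
  · rintro (rfl | rfl)
    · exact (pidx_dxI i).symm
    · exact (pidx_dxiI i).symm
  · rintro rfl
    by_cases h : b.1 < n
    · left
      rw [pidx, dif_pos h]
      exact Fin.ext rfl
    · right
      rw [pidx, dif_neg h]
      refine Fin.ext ?_
      have := b.2
      simp only [dxiI]; omega

lemma card_pair_sum (s : Finset (Fin (2 * n))) :
    ∑ i : Fin n, (P n i ∩ s).card = s.card := by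
  have h1 : ∀ i : Fin n, (P n i ∩ s).card = ∑ b ∈ s, if b ∈ P n i then 1 else 0 := by
    intro i
    rw [Finset.inter_comm, ← Finset.filter_mem_eq_inter, Finset.card_filter]
  rw [Finset.sum_congr rfl fun i _ => h1 i, Finset.sum_comm]
  have h2 : ∀ b : Fin (2 * n), (∑ i : Fin n, if b ∈ P n i then 1 else 0) = 1 := by
    intro b
    rw [Finset.sum_congr rfl fun i (_ : i ∈ Finset.univ) => by
      rw [show (if b ∈ P n i then 1 else 0) = if i = pidx b then 1 else 0 by
        simp [mem_P_iff_pidx]]]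
    rw [Finset.sum_ite_eq' Finset.univ (pidx b) (fun _ => 1), if_pos (Finset.mem_univ _)]
  rw [Finset.sum_congr rfl fun b _ => h2 b]
  simp

lemma free_sub_full (s : Finset (Fin (2 * n))) :
    ∑ i : Fin n, ((if Disjoint (P n i) s then (1:ℝ) else 0)
      - (if P n i ⊆ s then 1 else 0)) = (n : ℝ) - s.card := by
  have hterm : ∀ i : Fin n, ((if Disjoint (P n i) s then (1:ℝ) else 0)
      - (if P n i ⊆ s then 1 else 0)) = 1 - ((P n i ∩ s).card : ℝ) := by
    intro i
    by_cases hd : Disjoint (P n i) s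
    · have hni : ¬ P n i ⊆ s := by
        intro hc
        have h0 : dxI n i ∈ P n i := by rw [mem_P]; left; rfl
        exact (Finset.disjoint_left.1 hd h0) (hc h0)
      rw [if_pos hd, if_neg hni, (Finset.disjoint_iff_inter_eq_empty.1 hd)]
      simp
    · by_cases hsub : P n i ⊆ s
      · rw [if_neg hd, if_pos hsub, Finset.inter_eq_left.2 hsub, card_P]
        norm_num
      · have h1 : (P n i ∩ s).card = 1 := by
          have hle : (P n i ∩ s).card ≤ 2 :=
            le_trans (Finset.card_le_card Finset.inter_subset_left) (le_of_eq (card_P i))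
          have hne0 : (P n i ∩ s).card ≠ 0 := by
            rw [Ne, Finset.card_eq_zero, ← Finset.disjoint_iff_inter_eq_empty]
            exact hd
          have hne2 : (P n i ∩ s).card ≠ 2 := by
            intro hc
            apply hsub
            have heq : P n i ∩ s = P n i := Finset.eq_of_subset_of_card_le
              Finset.inter_subset_left (by rw [hc, card_P])
            rw [← heq]
            exact Finset.inter_subset_right
          omega
        rw [if_neg hd, if_neg hsub, h1]
        norm_num
  rw [Finset.sum_congr rfl fun i _ => hterm i, Finset.sum_sub_distrib]
  have : ∑ i : Fin n, ((P n i ∩ s).card : ℝ) = (s.card : ℝ) := by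
    rw [← Nat.cast_sum]
    exact_mod_cast congrArg (Nat.cast : ℕ → ℝ) (card_pair_sum s)
  rw [this]
  simp [mul_comm]

lemma commutator (Lam : SForm n → SForm n)
    (hLam : ∀ x y : SForm n, sip (Lop n x) y = sip x (Lam y))
    (x : SForm n) (s : Finset (Fin (2 * n))) :
    Lam (Lop n x) s - Lop n (Lam x) s = ((n : ℝ) - s.card) * x s := by
  classical
  set F : Fin n → Fin n → ℝ := fun i j =>
    if Disjoint (P n i) s ∧ P n j ⊆ s ∪ P n i then
      eps n i s * (eps n j ((s ∪ P n i) \ P n j) * x ((s ∪ P n i) \ P n j)) else 0 with hFdef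
  set G : Fin n → Fin n → ℝ := fun j i =>
    if P n j ⊆ s ∧ Disjoint (P n i) (s \ P n j) then
      eps n j (s \ P n j) * (eps n i (s \ P n j) * x ((s \ P n j) ∪ P n i)) else 0 with hGdef
  have hF : Lam (Lop n x) s = ∑ i : Fin n, ∑ j : Fin n, F i j := by
    rw [lam_apply Lam hLam]
    refine Finset.sum_congr rfl fun i _ => ?_
    by_cases hd : Disjoint (P n i) s
    · rw [if_pos hd, lop_apply, Finset.mul_sum]
      refine Finset.sum_congr rfl fun j _ => ?_
      by_cases hsub : P n j ⊆ s ∪ P n i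
      · rw [if_pos hsub, hFdef]; simp only; rw [if_pos ⟨hd, hsub⟩]
      · rw [if_neg hsub, hFdef]; simp only; rw [if_neg (fun hc => hsub hc.2)]; ring
    · rw [if_neg hd]
      refine (Finset.sum_eq_zero fun j _ => ?_).symm
      rw [hFdef]; simp only; rw [if_neg (fun hc => hd hc.1)]
  have hG : Lop n (Lam x) s = ∑ j : Fin n, ∑ i : Fin n, G j i := by
    rw [lop_apply]
    refine Finset.sum_congr rfl fun j _ => ?_
    by_cases hsub : P n j ⊆ s
    · rw [if_pos hsub, lam_apply Lam hLam, Finset.mul_sum]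
      refine Finset.sum_congr rfl fun i _ => ?_
      by_cases hd : Disjoint (P n i) (s \ P n j)
      · rw [if_pos hd, hGdef]; simp only; rw [if_pos ⟨hsub, hd⟩]
      · rw [if_neg hd, hGdef]; simp only; rw [if_neg (fun hc => hd hc.2)]; ring
    · rw [if_neg hsub]
      refine (Finset.sum_eq_zero fun i _ => ?_).symm
      rw [hGdef]; simp only; rw [if_neg (fun hc => hsub hc.1)]
  have hcross : ∀ i j : Fin n, j ≠ i → F i j - G j i = 0 := by
    intro i j hne
    have hpd : Disjoint (P n i) (P n j) := P_disjoint (fun hc => hne (hc.symm))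
    have hcond : (Disjoint (P n i) s ∧ P n j ⊆ s ∪ P n i)
        ↔ (P n j ⊆ s ∧ Disjoint (P n i) (s \ P n j)) := by
      constructor
      · rintro ⟨hd, hsub⟩
        refine ⟨fun b hb => ?_, Finset.disjoint_of_subset_right Finset.sdiff_subset hd⟩
        rcases Finset.mem_union.1 (hsub hb) with h | h
        · exact h
        · exact absurd h (Finset.disjoint_right.1 hpd hb)
      · rintro ⟨hsub, hd⟩
        have hds : Disjoint (P n i) s := by
          have : s ⊆ (s \ P n j) ∪ P n j := by
            intro b hb
            by_cases hbj : b ∈ P n j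
            · exact Finset.mem_union.2 (Or.inr hbj)
            · exact Finset.mem_union.2 (Or.inl (Finset.mem_sdiff.2 ⟨hb, hbj⟩))
          exact Finset.disjoint_of_subset_right this (Finset.disjoint_union_right.2 ⟨hd, hpd⟩)
        exact ⟨hds, hsub.trans Finset.subset_union_left⟩
    by_cases hc : Disjoint (P n i) s ∧ P n j ⊆ s ∪ P n i
    · have hd := hc.1
      obtain ⟨hsub, hd'⟩ := hcond.1 hc
      rw [hFdef, hGdef]; simp only
      rw [if_pos hc, if_pos (hcond.1 hc)]
      set t := s \ P n j with ht
      have htj : Disjoint t (P n j) := Finset.sdiff_disjoint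
      have hti : Disjoint t (P n i) := hd'.symm
      have hs_eq : s = t ∪ P n j := (Finset.sdiff_union_of_subset hsub).symm
      have hswap : (s ∪ P n i) \ P n j = t ∪ P n i := by
        ext b
        simp only [Finset.mem_sdiff, Finset.mem_union, ht]
        constructor
        · rintro ⟨h1 | h1, h2⟩
          · exact Or.inl ⟨h1, h2⟩
          · exact Or.inr h1
        · rintro (⟨h1, h2⟩ | h1)
          · exact ⟨Or.inl h1, h2⟩
          · exact ⟨Or.inr h1, Finset.disjoint_left.1 hpd h1⟩
      rw [hswap]
      have e1 : eps n i s = eps n i t * eps n i (P n j) := by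
        rw [hs_eq] at *; exact eps_union htj
      have e2 : eps n j (t ∪ P n i) = eps n j t * eps n j (P n i) := eps_union hti
      rw [e1, e2]
      have hr : eps n i t * eps n i (P n j) * (eps n j t * eps n j (P n i) * x (t ∪ P n i))
          = (eps n i (P n j) * eps n j (P n i)) * (eps n j t * (eps n i t * x (t ∪ P n i))) := by
        ring
      rw [hr, eps_P_P, one_mul, sub_self]
    · rw [hFdef, hGdef]; simp only
      rw [if_neg hc, if_neg (fun h => hc (hcond.2 h))]
      ring
  have hdiagF : ∀ i : Fin n, F i i = if Disjoint (P n i) s then x s else 0 := by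
    intro i
    rw [hFdef]; simp only
    by_cases hd : Disjoint (P n i) s
    · rw [if_pos ⟨hd, Finset.subset_union_right⟩, if_pos hd,
        Finset.union_sdiff_cancel_right hd.symm, ← mul_assoc, eps_mul_self, one_mul]
    · rw [if_neg (fun hc => hd hc.1), if_neg hd]
  have hdiagG : ∀ i : Fin n, G i i = if P n i ⊆ s then x s else 0 := by
    intro i
    rw [hGdef]; simp only
    by_cases hsub : P n i ⊆ s
    · rw [if_pos ⟨hsub, Finset.sdiff_disjoint.symm⟩, if_pos hsub,
        Finset.sdiff_union_of_subset hsub, ← mul_assoc, eps_mul_self, one_mul]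
    · rw [if_neg (fun hc => hsub hc.1), if_neg hsub]
  rw [hF, hG]
  rw [show (∑ j : Fin n, ∑ i : Fin n, G j i) = ∑ i : Fin n, ∑ j : Fin n, G j i from
    Finset.sum_comm]
  rw [← Finset.sum_sub_distrib]
  have hinner : ∀ i : Fin n, (∑ j : Fin n, F i j) - (∑ j : Fin n, G j i)
      = (if Disjoint (P n i) s then x s else 0) - (if P n i ⊆ s then x s else 0) := by
    intro i
    rw [← Finset.sum_sub_distrib]
    rw [Finset.sum_eq_single_of_mem i (Finset.mem_univ i)
      (fun j _ hj => hcross i j hj)]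
    rw [hdiagF, hdiagG]
  rw [Finset.sum_congr rfl fun i _ => hinner i]
  have : ∀ i : Fin n, (if Disjoint (P n i) s then x s else 0) - (if P n i ⊆ s then x s else 0)
      = ((if Disjoint (P n i) s then (1:ℝ) else 0) - (if P n i ⊆ s then 1 else 0)) * x s := by
    intro i
    by_cases h1 : Disjoint (P n i) s <;> by_cases h2 : P n i ⊆ s <;> simp [h1, h2]
  rw [Finset.sum_congr rfl fun i _ => this i, ← Finset.sum_mul, free_sub_full]

lemma Lop_add (x y : SForm n) : Lop n (x + y) = Lop n x + Lop n y := by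
  funext s
  rw [Pi.add_apply, lop_apply, lop_apply, lop_apply, ← Finset.sum_add_distrib]
  refine Finset.sum_congr rfl fun i _ => ?_
  by_cases h : P n i ⊆ s
  · rw [if_pos h, if_pos h, if_pos h, Pi.add_apply]; ring
  · rw [if_neg h, if_neg h, if_neg h]; ring

lemma Lop_smul (c : ℝ) (x : SForm n) : Lop n (c • x) = c • Lop n x := by
  funext s
  rw [Pi.smul_apply, lop_apply, lop_apply, smul_eq_mul, Finset.mul_sum]
  refine Finset.sum_congr rfl fun i _ => ?_
  by_cases h : P n i ⊆ s
  · rw [if_pos h, if_pos h, Pi.smul_apply, smul_eq_mul]; ring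
  · rw [if_neg h, if_neg h]; ring

lemma Lop_zero : Lop n 0 = 0 := by
  have := Lop_smul (0 : ℝ) (0 : SForm n)
  simpa using this

lemma Lpow_zero_apply (x : SForm n) : Lpow n 0 x = x := rfl

lemma Lpow_succ' (m : ℕ) (x : SForm n) : Lpow n (m + 1) x = Lop n (Lpow n m x) :=
  Function.iterate_succ_apply' _ _ _

lemma Lpow_succ (m : ℕ) (x : SForm n) : Lpow n (m + 1) x = Lpow n m (Lop n x) :=
  Function.iterate_succ_apply _ _ _

lemma Lpow_add_exp (a b : ℕ) (x : SForm n) : Lpow n (a + b) x = Lpow n a (Lpow n b x) :=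
  Function.iterate_add_apply _ _ _ _

lemma Lpow_zero_form (m : ℕ) : Lpow n m (0 : SForm n) = 0 := by
  induction m with
  | zero => rfl
  | succ m ih => rw [Lpow_succ', ih, Lop_zero]

lemma Lpow_add (m : ℕ) (x y : SForm n) :
    Lpow n m (x + y) = Lpow n m x + Lpow n m y := by
  induction m with
  | zero => rfl
  | succ m ih => rw [Lpow_succ', ih, Lop_add, Lpow_succ', Lpow_succ']

lemma Lpow_smul (m : ℕ) (c : ℝ) (x : SForm n) :
    Lpow n m (c • x) = c • Lpow n m x := by
  induction m with
  | zero => rfl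
  | succ m ih => rw [Lpow_succ', ih, Lop_smul, Lpow_succ']

lemma isForm_Lop {k : ℕ} {x : SForm n} (h : IsForm k x) : IsForm (k + 2) (Lop n x) := by
  intro s hs
  rw [lop_apply] at hs
  obtain ⟨i, _, hi⟩ := Finset.exists_ne_zero_of_sum_ne_zero hs
  by_cases hsub : P n i ⊆ s
  · rw [if_pos hsub] at hi
    have hx : x (s \ P n i) ≠ 0 := fun hc => hi (by rw [hc, mul_zero])
    have h1 := h _ hx
    rw [Finset.card_sdiff_of_subset hsub, card_P] at h1
    have h2 : 2 ≤ s.card := by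
      calc 2 = (P n i).card := (card_P i).symm
      _ ≤ s.card := Finset.card_le_card hsub
    omega
  · rw [if_neg hsub] at hi; exact absurd rfl hi

lemma isForm_Lpow {k : ℕ} {x : SForm n} (m : ℕ) (h : IsForm k x) :
    IsForm (k + 2 * m) (Lpow n m x) := by
  induction m with
  | zero => simpa [Lpow_zero_apply] using h
  | succ m ih =>
    rw [Lpow_succ']
    have := isForm_Lop ih
    rw [show k + 2 * m + 2 = k + 2 * (m + 1) by ring] at this
    exact this

lemma isForm_Lam (Lam : SForm n → SForm n)
    (hLam : ∀ x y : SForm n, sip (Lop n x) y = sip x (Lam y))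
    {k : ℕ} {x : SForm n} (h : IsForm k x) : IsForm (k - 2) (Lam x) := by
  intro s hs
  rw [lam_apply Lam hLam] at hs
  obtain ⟨i, _, hi⟩ := Finset.exists_ne_zero_of_sum_ne_zero hs
  by_cases hd : Disjoint (P n i) s
  · rw [if_pos hd] at hi
    have hx : x (s ∪ P n i) ≠ 0 := fun hc => hi (by rw [hc, mul_zero])
    have h1 := h _ hx
    rw [Finset.card_union_of_disjoint hd.symm, card_P] at h1
    omega
  · rw [if_neg hd] at hi; exact absurd rfl hi

lemma lam_low (Lam : SForm n → SForm n)
    (hLam : ∀ x y : SForm n, sip (Lop n x) y = sip x (Lam y))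
    {k : ℕ} {x : SForm n} (h : IsForm k x) (hk : k < 2) : Lam x = 0 := by
  funext s
  rw [lam_apply Lam hLam, Pi.zero_apply]
  refine Finset.sum_eq_zero fun i _ => ?_
  by_cases hd : Disjoint (P n i) s
  · rw [if_pos hd]
    have hx : x (s ∪ P n i) = 0 := by
      by_contra hc
      have h1 := h _ hc
      rw [Finset.card_union_of_disjoint hd.symm, card_P] at h1
      omega
    rw [hx, mul_zero]
  · rw [if_neg hd]

lemma eq_zero_of_isForm_big {k : ℕ} {x : SForm n} (h : IsForm k x) (hb : 2 * n < k) :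
    x = 0 := by
  funext s
  by_contra hc
  have h1 := h s hc
  have h2 : s.card ≤ 2 * n := by
    calc s.card ≤ (Finset.univ : Finset (Fin (2 * n))).card := Finset.card_le_univ s
    _ = 2 * n := by rw [Finset.card_univ, Fintype.card_fin]
  omega

lemma sip_comm (x y : SForm n) : sip x y = sip y x := by
  rw [sip, sip]; exact Finset.sum_congr rfl fun s _ => mul_comm _ _

lemma sip_zero_right (x : SForm n) : sip x 0 = 0 := by
  rw [sip]; exact Finset.sum_eq_zero fun s _ => by rw [Pi.zero_apply, mul_zero]

lemma sip_add_right (x y z : SForm n) : sip x (y + z) = sip x y + sip x z := by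
  rw [sip, sip, sip, ← Finset.sum_add_distrib]
  exact Finset.sum_congr rfl fun s _ => by rw [Pi.add_apply]; ring

lemma sip_smul_right (x : SForm n) (c : ℝ) (y : SForm n) :
    sip x (c • y) = c * sip x y := by
  rw [sip, sip, Finset.mul_sum]
  exact Finset.sum_congr rfl fun s _ => by rw [Pi.smul_apply, smul_eq_mul]; ring

lemma eq_zero_of_sip_self (x : SForm n) (h : sip x x = 0) : x = 0 := by
  funext s
  have h1 := (Finset.sum_eq_zero_iff_of_nonneg
    (fun t _ => mul_self_nonneg (x t))).1 h s (Finset.mem_univ s)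
  have := mul_self_eq_zero.1 h1
  simpa using this

lemma lam_zero (Lam : SForm n → SForm n)
    (hLam : ∀ x y : SForm n, sip (Lop n x) y = sip x (Lam y)) : Lam 0 = 0 := by
  funext s
  rw [lam_apply Lam hLam, Pi.zero_apply]
  refine Finset.sum_eq_zero fun i _ => ?_
  by_cases hd : Disjoint (P n i) s
  · rw [if_pos hd, Pi.zero_apply, mul_zero]
  · rw [if_neg hd]

lemma comm_form (Lam : SForm n → SForm n)
    (hLam : ∀ x y : SForm n, sip (Lop n x) y = sip x (Lam y))
    {p : ℕ} {x : SForm n} (h : IsForm p x) :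
    Lam (Lop n x) = Lop n (Lam x) + ((n : ℝ) - p) • x := by
  funext s
  have hc := commutator Lam hLam x s
  rw [Pi.add_apply, Pi.smul_apply, smul_eq_mul]
  by_cases hx : x s = 0
  · rw [hx] at hc ⊢
    rw [mul_zero] at hc ⊢
    linarith
  · rw [h s hx] at hc
    linarith

lemma lam_Lpow (Lam : SForm n → SForm n)
    (hLam : ∀ x y : SForm n, sip (Lop n x) y = sip x (Lam y))
    (m : ℕ) {p : ℕ} (x : SForm n) (h : IsForm p x) :
    Lam (Lpow n (m + 1) x) = Lpow n (m + 1) (Lam x)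
      + (((m : ℝ) + 1) * ((n : ℝ) - p - m)) • Lpow n m x := by
  induction m generalizing p x with
  | zero =>
    simp only [Lpow_succ', Lpow_zero_apply]
    rw [comm_form Lam hLam h]
    norm_num
  | succ m ih =>
    have h2 : IsForm (p + 2) (Lop n x) := isForm_Lop h
    rw [Lpow_succ (m + 1) x, ih (Lop n x) h2, comm_form Lam hLam h, Lpow_add, Lpow_smul,
      ← Lpow_succ (m + 1) (Lam x), ← Lpow_succ m x, add_assoc, ← add_smul]
    congr 1
    push_cast
    ring

lemma primitive_top (Lam : SForm n → SForm n)
    (hLam : ∀ x y : SForm n, sip (Lop n x) y = sip x (Lam y))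
    {p : ℕ} {x : SForm n} (h : IsForm p x) (hprim : Lam x = 0) (hpn : p ≤ n)
    {t : ℕ} (ht : n - p + 1 ≤ t) : Lpow n t x = 0 := by
  have hbig : Lpow n (n + 1) x = 0 := by
    refine eq_zero_of_isForm_big (isForm_Lpow (n + 1) h) ?_
    omega
  have hdesc : ∀ r : ℕ, r ≤ p → Lpow n (n + 1 - r) x = 0 := by
    intro r
    induction r with
    | zero => intro _; simpa using hbig
    | succ r ih =>
      intro hr1
      have hr : r ≤ p := by omega
      have prev : Lpow n (n + 1 - r) x = 0 := ih hr
      set u : ℕ := n - r with hu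
      have hnr : n + 1 - r = u + 1 := by omega
      rw [hnr] at prev
      have hstep := lam_Lpow Lam hLam u x h
      rw [prev, hprim, Lpow_zero_form, lam_zero Lam hLam, zero_add] at hstep
      have hcoef : ((u : ℝ) + 1) * ((n : ℝ) - p - u) ≠ 0 := by
        have hu1 : (u : ℝ) = (n : ℝ) - r := by
          rw [hu, Nat.cast_sub (by omega : r ≤ n)]
        rw [hu1]
        have hp1 : (r : ℝ) + 1 ≤ (p : ℝ) := by exact_mod_cast hr1
        have hn1 : (r : ℝ) ≤ (n : ℝ) := by
          have : r ≤ n := by omega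
          exact_mod_cast this
        apply mul_ne_zero
        · exact ne_of_gt (by linarith)
        · intro hc
          have heq : (n : ℝ) - p - ((n : ℝ) - r) = (r : ℝ) - p := by ring
          rw [heq] at hc
          linarith
      have := (smul_eq_zero.1 hstep.symm).resolve_left hcoef
      rw [show n + 1 - (r + 1) = u by omega]
      exact this
  by_cases hle : t ≤ n + 1
  · have h1 : n + 1 - (n + 1 - t) = t := by omega
    have := hdesc (n + 1 - t) (by omega)
    rwa [h1] at this
  · have h1 : t = (t - (n + 1)) + (n + 1) := by omega
    rw [h1, Lpow_add_exp, hbig, Lpow_zero_form]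

lemma primitive_inj (Lam : SForm n → SForm n)
    (hLam : ∀ x y : SForm n, sip (Lop n x) y = sip x (Lam y))
    {p : ℕ} {x : SForm n} (h : IsForm p x) (hprim : Lam x = 0) (hpn : p ≤ n)
    {t : ℕ} (ht : t ≤ n - p) (h0 : Lpow n t x = 0) : x = 0 := by
  induction t with
  | zero => simpa [Lpow_zero_apply] using h0
  | succ t ih =>
    have hstep := lam_Lpow Lam hLam t x h
    rw [h0, hprim, Lpow_zero_form, lam_zero Lam hLam, zero_add] at hstep
    have hcoef : ((t : ℝ) + 1) * ((n : ℝ) - p - t) ≠ 0 := by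
      have h1 : t + 1 + p ≤ n := by omega
      have h2 : (t : ℝ) + 1 + p ≤ (n : ℝ) := by exact_mod_cast h1
      apply mul_ne_zero
      · positivity
      · intro hc
        have hp0 : (0:ℝ) ≤ (p:ℝ) := by positivity
        linarith
    have hLt : Lpow n t x = 0 := by
      have := (smul_eq_zero.1 hstep.symm).resolve_left hcoef
      exact this
    exact ih (by omega) hLt

lemma orth (Lam : SForm n → SForm n)
    (hLam : ∀ x y : SForm n, sip (Lop n x) y = sip x (Lam y))
    {p q : ℕ} {u v : SForm n} (hu : IsForm p u) (hv : IsForm q v)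
    (hup : Lam u = 0) (hvp : Lam v = 0) :
    ∀ {a b : ℕ}, a ≠ b → sip (Lpow n a u) (Lpow n b v) = 0 := by
  intro a
  induction a generalizing q v with
  | zero =>
    intro b hab
    match b with
    | 0 => exact absurd rfl hab
    | b + 1 =>
      rw [Lpow_zero_apply, sip_comm, Lpow_succ', hLam, hup, sip_zero_right]
  | succ a ih =>
    intro b hab
    match b with
    | 0 =>
      rw [Lpow_zero_apply, Lpow_succ', hLam, hvp, sip_zero_right]
    | b + 1 =>
      rw [Lpow_succ', hLam, lam_Lpow Lam hLam b v hv, sip_add_right, sip_smul_right]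
      rw [hvp, Lpow_zero_form, sip_zero_right, zero_add]
      rw [ih hv hvp (by omega)]
      ring

lemma isForm_zero (k : ℕ) : IsForm k (0 : SForm n) := fun s hs => absurd rfl hs

def Vsub (n k : ℕ) : Submodule ℝ (SForm n) where
  carrier := {x | IsForm k x}
  add_mem' := by
    intro x y hx hy s hs
    by_cases h1 : x s = 0
    · exact hy s (by rw [Pi.add_apply, h1, zero_add] at hs; exact hs)
    · exact hx s h1
  zero_mem' := isForm_zero k
  smul_mem' := by
    intro c x hx s hs
    refine hx s fun h0 => hs ?_
    rw [Pi.smul_apply, h0, smul_zero]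

def LopLin (n : ℕ) : SForm n →ₗ[ℝ] SForm n where
  toFun := Lop n
  map_add' := Lop_add
  map_smul' := Lop_smul

lemma isForm_sub {k : ℕ} {x y : SForm n} (hx : IsForm k x) (hy : IsForm k y) :
    IsForm k (x - y) := by
  intro s hs
  by_cases h1 : x s = 0
  · refine hy s fun h0 => hs ?_
    rw [Pi.sub_apply, h1, h0, sub_zero]
  · exact hx s h1

abbrev Esp (n : ℕ) := WithLp 2 (SForm n)

def iota (n : ℕ) : Esp n ≃ₗ[ℝ] SForm n := WithLp.linearEquiv 2 ℝ (SForm n)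

lemma inner_eq_sip (x y : Esp n) :
    (inner ℝ x y : ℝ) = sip (iota n x) (iota n y) := by
  rw [sip]
  rw [PiLp.inner_apply]
  refine Finset.sum_congr rfl fun s _ => ?_
  rw [RCLike.inner_apply, conj_trivial]
  exact mul_comm _ _

lemma decomp_step (Lam : SForm n → SForm n)
    (hLam : ∀ x y : SForm n, sip (Lop n x) y = sip x (Lam y))
    {k : ℕ} (hk2 : 2 ≤ k) {x : SForm n} (hx : IsForm k x) :
    ∃ z y : SForm n, IsForm k z ∧ Lam z = 0 ∧ IsForm (k - 2) y ∧ x = z + Lop n y := by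
  classical
  set K : Submodule ℝ (Esp n) :=
    (Submodule.map (LopLin n) (Vsub n (k - 2))).comap ((iota n).toLinearMap) with hK
  set v : Esp n := (iota n).symm x with hv
  set w : Esp n := (K.orthogonalProjectionOnto v : Esp n) with hw
  have hwK : w ∈ K := Submodule.coe_mem _
  have hperp : v - w ∈ Kᗮ := K.sub_starProjection_mem_orthogonal v
  obtain ⟨y, hyV, hyw⟩ := hwK
  set z : SForm n := x - Lop n y with hz
  have hzw : z = iota n (v - w) := by
    rw [map_sub, hz]
    have h1 : iota n v = x := by rw [hv]; exact (iota n).apply_symm_apply x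
    have h2 : iota n w = Lop n y := hyw.symm
    rw [h1, h2]
  have hziso : IsForm k z := by
    refine isForm_sub hx ?_
    have := isForm_Lop (k := k - 2) (x := y) hyV
    rwa [show k - 2 + 2 = k by omega] at this
  have hprim : Lam z = 0 := by
    have hall : ∀ y' : SForm n, IsForm (k - 2) y' → sip y' (Lam z) = 0 := by
      intro y' hy'
      rw [← hLam]
      have hmem : (iota n).symm (Lop n y') ∈ K := by
        rw [hK]
        refine Submodule.mem_comap.2 ?_
        rw [LinearEquiv.coe_coe, (iota n).apply_symm_apply]
        exact ⟨y', hy', rfl⟩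
      have h0 := (Submodule.mem_orthogonal K (v - w)).1 hperp _ hmem
      rw [inner_eq_sip, (iota n).apply_symm_apply, ← hzw] at h0
      exact h0
    have hLz : IsForm (k - 2) (Lam z) := isForm_Lam Lam hLam hziso
    exact eq_zero_of_sip_self _ (hall _ hLz)
  exact ⟨z, y, hziso, hprim, hyV, by rw [hz]; abel⟩

lemma Lop_sum {ι : Type*} (t : Finset ι) (f : ι → SForm n) :
    Lop n (∑ j ∈ t, f j) = ∑ j ∈ t, Lop n (f j) :=
  map_sum (LopLin n) f t

lemma Lpow_sum (a : ℕ) {ι : Type*} (t : Finset ι) (f : ι → SForm n) :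
    Lpow n a (∑ j ∈ t, f j) = ∑ j ∈ t, Lpow n a (f j) := by
  induction a with
  | zero => rfl
  | succ a ih => rw [Lpow_succ', ih, Lop_sum]
                 exact Finset.sum_congr rfl fun j _ => (Lpow_succ' a (f j)).symm

lemma sip_sum_right {ι : Type*} (t : Finset ι) (x : SForm n) (f : ι → SForm n) :
    sip x (∑ j ∈ t, f j) = ∑ j ∈ t, sip x (f j) := by
  rw [sip]
  have h1 : ∀ s, x s * (∑ j ∈ t, f j) s = ∑ j ∈ t, x s * f j s := by
    intro s; rw [Finset.sum_apply, Finset.mul_sum]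
  rw [Finset.sum_congr rfl fun s _ => h1 s, Finset.sum_comm]
  rfl

lemma full_decomp (Lam : SForm n → SForm n)
    (hLam : ∀ x y : SForm n, sip (Lop n x) y = sip x (Lam y)) :
    ∀ k : ℕ, k ≤ n → ∀ x : SForm n, IsForm k x →
      ∃ c : ℕ → SForm n,
        (∀ j, Lam (c j) = 0 ∧ IsForm (k - 2 * j) (c j) ∧ (2 * j ≤ k ∨ c j = 0)) ∧
        (∀ j, k < 2 * j → c j = 0) ∧
        x = ∑ j ∈ Finset.range (k / 2 + 1), Lpow n j (c j) := by
  intro k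
  induction k using Nat.strong_induction_on with
  | _ k IH =>
    intro hkn x hx
    by_cases hk2 : k < 2
    · set c0 : ℕ → SForm n := fun j => if j = 0 then x else 0 with hc0
      have hc0e : ∀ j, c0 j = if j = 0 then x else 0 := fun _ => rfl
      refine ⟨c0, ?_, ?_, ?_⟩
      · intro j
        by_cases hj : j = 0
        · subst hj
          rw [hc0e 0, if_pos rfl]
          exact ⟨lam_low Lam hLam hx hk2, by simpa using hx, Or.inl (by omega)⟩
        · rw [hc0e j, if_neg hj]
          exact ⟨lam_zero Lam hLam, isForm_zero _, Or.inr rfl⟩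
      · intro j hj
        rw [hc0e j, if_neg (show ¬ j = 0 by omega)]
      · have h0 : k / 2 = 0 := by omega
        rw [h0, Finset.sum_range_one, Lpow_zero_apply, hc0e 0, if_pos rfl]
    · push_neg at hk2
      obtain ⟨z, y, hziso, hzprim, hyiso, hxe⟩ := decomp_step Lam hLam hk2 hx
      obtain ⟨c', hc'1, hc'2, hc'3⟩ := IH (k - 2) (by omega) (by omega) y hyiso
      set cc : ℕ → SForm n := fun j => Nat.casesOn j z c' with hcc
      have cc0 : cc 0 = z := rfl
      have ccS : ∀ j, cc (j + 1) = c' j := fun _ => rfl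
      refine ⟨cc, ?_, ?_, ?_⟩
      · intro j
        cases j with
        | zero =>
          rw [cc0]
          exact ⟨hzprim, by simpa using hziso, Or.inl (by omega)⟩
        | succ j =>
          rw [ccS j]
          obtain ⟨h1, h2, h3⟩ := hc'1 j
          refine ⟨h1, ?_, ?_⟩
          · rwa [show k - 2 * (j + 1) = k - 2 - 2 * j by omega]
          · rcases h3 with h | h
            · exact Or.inl (by omega)
            · exact Or.inr h
      · intro j hj
        cases j with
        | zero => omega
        | succ j => rw [ccS j]; exact hc'2 j (by omega)
      · have hmap : Lop n (∑ j ∈ Finset.range ((k - 2) / 2 + 1), Lpow n j (c' j))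
            = ∑ j ∈ Finset.range ((k - 2) / 2 + 1), Lpow n (j + 1) (c' j) := by
          rw [Lop_sum]
          exact Finset.sum_congr rfl fun j _ => (Lpow_succ' j (c' j)).symm
        have hr : ∑ j ∈ Finset.range (k / 2 + 1), Lpow n j (cc j)
            = z + ∑ j ∈ Finset.range ((k - 2) / 2 + 1), Lpow n (j + 1) (c' j) := by
          rw [show k / 2 + 1 = ((k - 2) / 2 + 1) + 1 by omega, Finset.sum_range_succ',
            Lpow_zero_apply, cc0, add_comm]
        rw [hxe, hc'3, hmap, hr]

end Prim

open Prim

/-- for a `k`-form `x` with `k ≤ n`: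
(i) if `L^{n−k+s} x = 0` for some `s ≥ 1`, then `x = Σ_{0 ≤ j ≤ s−1} L^j x_j` with
each `x_j` a primitive `(k−2j)`-form (so `x_j = 0` whenever `2j > k`);
(ii) `x` is primitive (`Λx = 0`) iff `L^{n−k+1} x = 0`. -/
theorem primitivity_criterion (n : ℕ) (hn : 1 ≤ n)
    (Lam : SForm n → SForm n)
    (hLam : ∀ x y : SForm n, sip (Lop n x) y = sip x (Lam y))
    (k : ℕ) (hk : k ≤ n) (x : SForm n) (hx : IsForm k x) :
    (∀ s : ℕ, 1 ≤ s → Lpow n (n - k + s) x = 0 →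
      ∃ c : ℕ → SForm n,
        (∀ j < s, Lam (c j) = 0 ∧ IsForm (k - 2 * j) (c j) ∧ (2 * j ≤ k ∨ c j = 0)) ∧
        x = ∑ j ∈ Finset.range s, Lpow n j (c j)) ∧
    (Lam x = 0 ↔ Lpow n (n - k + 1) x = 0) := by
  have part1 : ∀ s : ℕ, 1 ≤ s → Lpow n (n - k + s) x = 0 →
      ∃ c : ℕ → SForm n,
        (∀ j < s, Lam (c j) = 0 ∧ IsForm (k - 2 * j) (c j) ∧ (2 * j ≤ k ∨ c j = 0)) ∧
        x = ∑ j ∈ Finset.range s, Lpow n j (c j) := by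
    intro s hs hvan
    obtain ⟨c, hc1, hc2, hc3⟩ := full_decomp Lam hLam k hk x hx
    set m := k / 2 + 1 with hm
    set a := n - k + s with ha
    have hprimj : ∀ j, Lam (c j) = 0 := fun j => (hc1 j).1
    have hvansum : ∑ j ∈ Finset.range m, Lpow n (a + j) (c j) = 0 := by
      have h1 : ∑ j ∈ Finset.range m, Lpow n (a + j) (c j)
          = Lpow n a (∑ j ∈ Finset.range m, Lpow n j (c j)) := by
        rw [Lpow_sum]
        exact Finset.sum_congr rfl fun j _ => Lpow_add_exp a j (c j)
      rw [h1, ← hc3, hvan]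
    have hzero : ∀ i ∈ Finset.range m, Lpow n (a + i) (c i) = 0 := by
      intro i hi
      refine eq_zero_of_sip_self _ ?_
      have h2 : sip (Lpow n (a + i) (c i)) (∑ j ∈ Finset.range m, Lpow n (a + j) (c j))
          = sip (Lpow n (a + i) (c i)) (Lpow n (a + i) (c i)) := by
        rw [sip_sum_right]
        refine Finset.sum_eq_single_of_mem i hi fun j _ hj => ?_
        exact orth Lam hLam (hc1 i).2.1 (hc1 j).2.1 (hprimj i) (hprimj j)
          (by omega : a + i ≠ a + j)
      rw [hvansum, sip_zero_right] at h2
      exact h2.symm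
    have hcs : ∀ j, s ≤ j → c j = 0 := by
      intro j hj
      by_cases hjm : j < m
      · rcases (hc1 j).2.2 with h2j | h0
        · refine primitive_inj Lam hLam (hc1 j).2.1 (hprimj j)
            (by omega : k - 2 * j ≤ n) (t := a + j)
            (by omega : a + j ≤ n - (k - 2 * j)) ?_
          exact hzero j (Finset.mem_range.2 hjm)
        · exact h0
      · exact hc2 j (by omega)
    refine ⟨c, fun j _ => hc1 j, ?_⟩
    have hext : ∀ (r : ℕ), m ≤ r → s ≤ r →
        x = ∑ j ∈ Finset.range r, Lpow n j (c j) → True := fun _ _ _ _ => trivial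
    have key : ∑ j ∈ Finset.range s, Lpow n j (c j)
        = ∑ j ∈ Finset.range (max s m), Lpow n j (c j) := by
      refine Finset.sum_subset (Finset.range_subset_range.2 (le_max_left s m)) ?_
      intro j _ hj
      rw [Finset.mem_range, not_lt] at hj
      rw [hcs j hj, Lpow_zero_form]
    have key2 : ∑ j ∈ Finset.range m, Lpow n j (c j)
        = ∑ j ∈ Finset.range (max s m), Lpow n j (c j) := by
      refine Finset.sum_subset (Finset.range_subset_range.2 (le_max_right s m)) ?_
      intro j _ hj
      rw [Finset.mem_range, not_lt] at hj
      have : c j = 0 := hc2 j (by omega)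
      rw [this, Lpow_zero_form]
    rw [hc3, key2, ← key]
  refine ⟨part1, ?_, ?_⟩
  · intro hprim
    exact primitive_top Lam hLam hx hprim hk (le_refl _)
  · intro hvan
    obtain ⟨c, hc1, hce⟩ := part1 1 (le_refl 1) hvan
    rw [hce, Finset.sum_range_one, Lpow_zero_apply]
    exact (hc1 0 (by norm_num)).1
end
end
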